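/- For every subshift Σ one has 0 ≤ h*_𝒞(Σ) ≤ h_𝒞(Σ) ≤ h_top(Σ), and there exists a subshift for which all three of these inequalities are strict. In particular, there exist weak-QFT subshifts which are not subshifts of quasi-finite type. -/

import Mathlib

open Filter Set MeasureTheory

namespace QFTPaper

variable {A : Type*} {B : Type*}

/-- The left shift on bi-infinite sequences over the alphabet `A`. -/
def shift (x : ℤ → A) : ℤ → A := fun n => x (n + 1)

/-- A subshift: a closed, shift-invariant subset of `A^ℤ`. -/
def IsSubshift [TopologicalSpace A] (X : Set (ℤ → A)) : Prop :=
  IsClosed X ∧ shift '' X = X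

/-- The finite word `w` occurs in `x` at position `k`. -/
def OccursAt (w : List A) (x : ℤ → A) (k : ℤ) : Prop :=
  ∀ i : Fin w.length, x (k + (i : ℕ)) = w.get i

/-- The language of `X`: words of length `n` occurring in elements of `X`
(at position `0`, which is no restriction by shift-invariance). -/
def Lang (X : Set (ℤ → A)) (n : ℕ) : Set (List A) :=
  { w | w.length = n ∧ ∃ x ∈ X, OccursAt w x 0 }

/-- Topological entropy of a subshift. -/
noncomputable def hTop (X : Set (ℤ → A)) : ℝ :=
  limsup (fun n : ℕ => Real.log (Nat.card ↥(Lang X n)) / (n : ℝ)) atTop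

/-- Follower set of the finite word `w = A₋ₙ…A₀` (listed from `A₋ₙ` to `A₀`):
the set of one-sided sequences `B₀B₁B₂…` with `B ∈ X` and `B₋ₙ…B₀ = A₋ₙ…A₀`,
realized by requiring `w` to occur in `B` at positions `0,…,n` and reading off
the tail of `B` starting at the position of the last letter of `w`.
For the empty word this gives `X₊` (by shift-invariance). -/
def fol (X : Set (ℤ → A)) (w : List A) : Set (ℕ → A) :=
  { y | ∃ B ∈ X, (∀ i : Fin w.length, B ((i : ℕ) : ℤ) = w.get i) ∧
        ∀ k : ℕ, y k = B ((w.length : ℤ) - 1 + (k : ℤ)) }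

/-- `w = A₋ₙ…A₀` is a left constraint:
`∅ ≠ fol(A₋ₙ…A₀) ⊊ fol(A₋ₙ₊₁…A₀)`. -/
def IsLeftConstraint (X : Set (ℤ → A)) (w : List A) : Prop :=
  w ≠ [] ∧ fol X w ≠ ∅ ∧ fol X w ⊂ fol X w.tail

/-- `𝒞(X, n)`: the set of left constraints of length `n`. -/
def LC (X : Set (ℤ → A)) (n : ℕ) : Set (List A) :=
  { w | w.length = n ∧ IsLeftConstraint X w }

/-- The left constraint entropy `h_𝒞(X) = limsup (1/n) log⁺ #𝒞(X,n)`. -/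
noncomputable def hC (X : Set (ℤ → A)) : ℝ :=
  limsup (fun n : ℕ => max 0 (Real.log (Nat.card ↥(LC X n))) / (n : ℝ)) atTop

/-- The time-reversed subshift `X̄`. -/
def rev (X : Set (ℤ → A)) : Set (ℤ → A) :=
  (fun x : ℤ → A => fun n : ℤ => x (-n)) '' X

/-- The symmetric constraint entropy `h_𝒮𝒞(X) = min (h_𝒞(X), h_𝒞(X̄))`. -/
noncomputable def hSC (X : Set (ℤ → A)) : ℝ := min (hC X) (hC (rev X))

/-- Subshift of quasi-finite type: `h_𝒮𝒞(X) < h_top(X)`. -/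
def IsQFT [TopologicalSpace A] (X : Set (ℤ → A)) : Prop :=
  IsSubshift X ∧ hSC X < hTop X

/-- The word `B₋ₘ…B₀` read off from a one-sided past `b` (where `b j = B₋ⱼ`). -/
def wordOf (b : ℕ → A) (m : ℕ) : List A :=
  (List.range (m + 1)).map fun j => b (m - j)

/-- An extendable left constraint: a left constraint `A₋ₙ…A₀` which admits a
one-sided past `B` extending it such that `B₋ₘ…B₀` is again a left constraint
for infinitely many `m`. -/
def IsExtendable (X : Set (ℤ → A)) (w : List A) : Prop :=
  IsLeftConstraint X w ∧
  ∃ b : ℕ → A, wordOf b (w.length - 1) = w ∧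
    ∀ N : ℕ, ∃ m, N ≤ m ∧ IsLeftConstraint X (wordOf b m)

/-- `𝒞*(X, n)`: the set of extendable left constraints of length `n`. -/
def ELC (X : Set (ℤ → A)) (n : ℕ) : Set (List A) :=
  { w | w.length = n ∧ IsExtendable X w }

/-- The extendable left constraint entropy `h*_𝒞(X)`. -/
noncomputable def hCstar (X : Set (ℤ → A)) : ℝ :=
  limsup (fun n : ℕ => Real.log (Nat.card ↥(ELC X n)) / (n : ℝ)) atTop

/-- `h*_𝒮𝒞(X) = min (h*_𝒞(X), h*_𝒞(X̄))`. -/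
noncomputable def hSCstar (X : Set (ℤ → A)) : ℝ := min (hCstar X) (hCstar (rev X))

/-- Subshift of weak quasi-finite type: `h*_𝒮𝒞(X) < h_top(X)`. -/
def IsWeakQFT [TopologicalSpace A] (X : Set (ℤ → A)) : Prop :=
  IsSubshift X ∧ hSCstar X < hTop X

/-- Subshift of finite type: defined by excluding a finite set of finite words. -/
def IsSFT (X : Set (ℤ → A)) : Prop :=
  ∃ F : Finset (List A), X = { x | ∀ w ∈ F, ∀ k : ℤ, ¬ OccursAt w x k }

/-- Sofic subshift: the image of an SFT under a continuous shift-commuting map. -/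
def IsSofic [TopologicalSpace A] (X : Set (ℤ → A)) : Prop :=
  ∃ (B : Type) (_ : Fintype B) (Y : Set (ℤ → B)) (π : (ℤ → B) → (ℤ → A)),
    IsSFT Y ∧
    (letI : TopologicalSpace B := ⊥
     Continuous π) ∧
    (∀ x : ℤ → B, π (shift x) = shift (π x)) ∧ π '' Y = X


/-- Topological conjugacy of subshifts: a homeomorphism commuting with the shifts. -/
def Conjugate [TopologicalSpace A] [TopologicalSpace B]
    (X : Set (ℤ → A)) (Y : Set (ℤ → B)) : Prop :=
  ∃ φ : X ≃ₜ Y, ∀ x x' : X, (x' : ℤ → A) = shift (x : ℤ → A) →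
    (φ x' : ℤ → B) = shift (φ x : ℤ → B)

/-- The cylinder of a word of length `n` placed at positions `0,…,n-1`. -/
def cylSet (n : ℕ) (w : Fin n → A) : Set (ℤ → A) :=
  { x | ∀ i : Fin n, x ((i : ℕ) : ℤ) = w i }

/-- Entropy of the partition of `A^ℤ` into cylinders of length `n`. -/
noncomputable def blockEntropy [Fintype A] [MeasurableSpace A]
    (μ : Measure (ℤ → A)) (n : ℕ) : ℝ :=
  ∑ w : Fin n → A, Real.negMulLog ((μ (cylSet n w)).toReal)

/-- Kolmogorov–Sinai entropy of a shift-invariant measure on `A^ℤ`,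
computed with the natural (generating) partition into cylinders. -/
noncomputable def KSEntropy [Fintype A] [MeasurableSpace A]
    (μ : Measure (ℤ → A)) : ℝ :=
  ⨅ n : ℕ, blockEntropy μ (n + 1) / (n + 1)

/-- A maximum measure: an ergodic shift-invariant Borel probability measure
carried by `X` whose Kolmogorov–Sinai entropy equals the topological entropy of `X`. -/
def IsMaxMeasure [Fintype A] [MeasurableSpace A]
    (X : Set (ℤ → A)) (μ : Measure (ℤ → A)) : Prop :=
  IsProbabilityMeasure μ ∧ μ Xᶜ = 0 ∧ Ergodic shift μ ∧ KSEntropy μ = hTop X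

/-- The number of points of `X` fixed by the `n`-th power of the shift. -/
noncomputable def perCount (X : Set (ℤ → A)) (n : ℕ) : ℕ :=
  Nat.card {x : ℤ → A | x ∈ X ∧ shift^[n] x = x}
section Helpers

open Real

/-! ### Generic helpers -/

lemma log_nat_nonneg (m : ℕ) : 0 ≤ Real.log m := by
  rcases Nat.eq_zero_or_pos m with h | h
  · simp [h]
  · exact Real.log_nonneg (by exact_mod_cast h)

lemma log_nat_mono {a b : ℕ} (h : a ≤ b) : Real.log a ≤ Real.log b := by
  rcases Nat.eq_zero_or_pos a with h0 | h0
  · simpa [h0] using log_nat_nonneg b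
  · exact Real.log_le_log (by exact_mod_cast h0) (by exact_mod_cast h)

lemma limsup_nonneg (f : ℕ → ℝ) (hf : ∀ n, 0 ≤ f n) : 0 ≤ Filter.limsup f Filter.atTop := by
  rw [Filter.limsup_eq]
  apply Real.sInf_nonneg
  intro a ha
  obtain ⟨n, hn⟩ := (ha : ∀ᶠ n in Filter.atTop, f n ≤ a).exists
  exact le_trans (hf n) hn

lemma limsup_le_of_le_tendsto {f g : ℕ → ℝ} {c : ℝ} (h0 : ∀ n, 0 ≤ f n)
    (h : ∀ᶠ n in Filter.atTop, f n ≤ g n) (hg : Filter.Tendsto g Filter.atTop (nhds c)) :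
    Filter.limsup f Filter.atTop ≤ c := by
  have hcb : Filter.IsCoboundedUnder (· ≤ ·) Filter.atTop f :=
    Filter.IsBoundedUnder.isCoboundedUnder_le
      (Filter.isBoundedUnder_of ⟨0, fun n => h0 n⟩)
  have := Filter.limsup_le_limsup h hcb hg.isBoundedUnder_le
  rwa [hg.limsup_eq] at this

lemma le_limsup_of_tendsto_le {f g : ℕ → ℝ} {c C : ℝ}
    (h : ∀ᶠ n in Filter.atTop, g n ≤ f n) (hg : Filter.Tendsto g Filter.atTop (nhds c))
    (hC : ∀ n, f n ≤ C) : c ≤ Filter.limsup f Filter.atTop := by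
  have hcb : Filter.IsCoboundedUnder (· ≤ ·) Filter.atTop g :=
    Filter.IsBoundedUnder.isCoboundedUnder_le hg.isBoundedUnder_ge
  have := Filter.limsup_le_limsup h hcb (Filter.isBoundedUnder_of ⟨C, fun n => hC n⟩)
  rwa [hg.limsup_eq] at this

/-- `(n-1)·L/n → L`. -/
lemma tendsto_sub_one_mul_div (L : ℝ) :
    Filter.Tendsto (fun n : ℕ => ((n : ℝ) - 1) * L / n) Filter.atTop (nhds L) := by
  have h1 : Filter.Tendsto (fun n : ℕ => (1 : ℝ) - 1 / n) Filter.atTop (nhds 1) := by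
    have := tendsto_one_div_atTop_nhds_zero_nat (𝕜 := ℝ)
    simpa using (tendsto_const_nhds (x := (1:ℝ))).sub this
  have h2 : Filter.Tendsto (fun n : ℕ => ((1 : ℝ) - 1 / n) * L) Filter.atTop (nhds L) := by
    simpa using h1.mul_const L
  apply h2.congr'
  filter_upwards [Filter.eventually_gt_atTop 0] with n hn
  have : (n : ℝ) ≠ 0 := by positivity
  field_simp

/-- `log(n+K)/n → 0`. -/
lemma tendsto_log_add_div {K : ℝ} (hK : 0 ≤ K) :
    Filter.Tendsto (fun n : ℕ => Real.log ((n : ℝ) + K) / n) Filter.atTop (nhds 0) := by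
  have h0 : Filter.Tendsto (fun x : ℝ => Real.log x / x) Filter.atTop (nhds 0) :=
    Real.isLittleO_log_id_atTop.tendsto_div_nhds_zero
  have hx : Filter.Tendsto (fun n : ℕ => (n : ℝ) + K) Filter.atTop Filter.atTop :=
    Filter.tendsto_atTop_add_const_right _ K tendsto_natCast_atTop_atTop
  have h1 : Filter.Tendsto (fun n : ℕ => Real.log ((n:ℝ) + K) / ((n:ℝ) + K))
      Filter.atTop (nhds 0) := h0.comp hx
  have h2 : Filter.Tendsto (fun n : ℕ => ((n : ℝ) + K) / n) Filter.atTop (nhds 1) := by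
    have := tendsto_one_div_atTop_nhds_zero_nat (𝕜 := ℝ)
    have h3 : Filter.Tendsto (fun n : ℕ => (1 : ℝ) + K * (1 / n)) Filter.atTop (nhds 1) := by
      simpa using (tendsto_const_nhds (x := (1:ℝ))).add (this.const_mul K)
    apply h3.congr'
    filter_upwards [Filter.eventually_gt_atTop 0] with n hn
    have : (n : ℝ) ≠ 0 := by positivity
    field_simp
  have := h1.mul h2
  rw [zero_mul] at this
  apply this.congr'
  filter_upwards [Filter.eventually_gt_atTop 0] with n hn
  have hn' : (n : ℝ) ≠ 0 := by positivity
  have hnK : ((n:ℝ) + K) ≠ 0 := by positivity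
  field_simp

/-- `log((n+K)·c^n)/n → log c`. -/
lemma tendsto_log_poly_pow {K : ℝ} (hK : 0 ≤ K) (c : ℕ) (hc : 1 ≤ c) :
    Filter.Tendsto (fun n : ℕ => Real.log (((n : ℝ) + K) * (c : ℝ) ^ n) / n)
      Filter.atTop (nhds (Real.log c)) := by
  have hmain : Filter.Tendsto (fun n : ℕ => Real.log ((n:ℝ) + K) / n + Real.log c * (n / n))
      Filter.atTop (nhds (Real.log c)) := by
    have h2 : Filter.Tendsto (fun n : ℕ => Real.log c * ((n:ℝ) / n)) Filter.atTop
        (nhds (Real.log c)) := by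
      have : Filter.Tendsto (fun n : ℕ => (n:ℝ) / n) Filter.atTop (nhds 1) := by
        apply tendsto_const_nhds.congr'
        filter_upwards [Filter.eventually_gt_atTop 0] with n hn
        have : (n : ℝ) ≠ 0 := by positivity
        simp [this]
      simpa using (this.const_mul (Real.log c))
    simpa using (tendsto_log_add_div hK).add h2
  apply hmain.congr'
  filter_upwards [Filter.eventually_gt_atTop 0] with n hn
  have hn' : (n : ℝ) ≠ 0 := by positivity
  have hKpos : (0:ℝ) < (n:ℝ) + K ∨ ((n:ℝ) + K) ≤ 0 := lt_or_ge 0 _ |>.imp id id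
  have hK0 : ((n:ℝ) + K) ≠ 0 := by positivity
  have hcpow : ((c:ℝ)) ^ n ≠ 0 := by positivity
  rw [Real.log_mul hK0 hcpow, Real.log_pow]
  field_simp

end Helpers
section Words

variable {A : Type*}

lemma words_injGet {S : Set (List A)} {n : ℕ} (h : ∀ w ∈ S, w.length = n) :
    ∃ F : S → (Fin n → A), Function.Injective F ∧
      ∀ (w : S) (i : Fin n), F w i = (w : List A).get ⟨i, by rw [h w w.2]; exact i.2⟩ := by
  refine ⟨fun w i => (w : List A).get ⟨i, by rw [h w w.2]; exact i.2⟩, ?_, fun w i => rfl⟩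
  intro ⟨w, hw⟩ ⟨w', hw'⟩ hF
  ext1
  apply List.ext_get (by rw [h w hw, h w' hw'])
  intro i h1 h2
  have := congrFun hF ⟨i, by rw [h w hw] at h1; exact h1⟩
  simpa using this

lemma words_finite [Finite A] {S : Set (List A)} {n : ℕ} (h : ∀ w ∈ S, w.length = n) :
    S.Finite := by
  obtain ⟨F, hF, -⟩ := words_injGet h
  rw [← Set.finite_coe_iff]
  exact Finite.of_injective F hF

lemma card_words_le [Fintype A] {S : Set (List A)} {n : ℕ} (h : ∀ w ∈ S, w.length = n) :
    Nat.card S ≤ Fintype.card A ^ n := by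
  obtain ⟨F, hF, -⟩ := words_injGet h
  have h1 := Nat.card_le_card_of_injective F hF
  classical
  have h2 : Nat.card (Fin n → A) = Fintype.card A ^ n := by
    rw [Nat.card_eq_fintype_card, Fintype.card_fun, Fintype.card_fin]
  omega

/-- Cardinality bound for sets of length-`n` words whose letters lie in a set `L`
on which `e` is injective, except for at most one occurrence of a marker `μ`. -/
lemma card_marker_words_le [Fintype A] {S : Set (List A)} {n r : ℕ}
    (μ : A) (e : A → Fin r) (L : Set A)
    (hlen : ∀ w ∈ S, w.length = n)
    (hmark : ∀ w ∈ S, ∀ i j : Fin w.length, w.get i = μ → w.get j = μ → (i : ℕ) = (j : ℕ))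
    (hletter : ∀ w ∈ S, ∀ i : Fin w.length, w.get i = μ ∨ w.get i ∈ L)
    (hinjL : Set.InjOn e L) (hμL : μ ∉ L) :
    Nat.card S ≤ (n + 1) * r ^ n := by
  classical
  have hidx : ∀ (w : S) (i : Fin n), (i : ℕ) < (w : List A).length := by
    intro w i; rw [hlen w w.2]; exact i.2
  set get' : S → Fin n → A := fun w i => (w : List A).get ⟨i, hidx w i⟩ with hget'
  have hmark' : ∀ (w : S) (i j : Fin n), get' w i = μ → get' w j = μ → i = j := by
    intro w i j hi hj
    exact Fin.ext (hmark w w.2 ⟨i, hidx w i⟩ ⟨j, hidx w j⟩ hi hj)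
  have hletter' : ∀ (w : S) (i : Fin n), get' w i = μ ∨ get' w i ∈ L := by
    intro w i; exact hletter w w.2 ⟨i, hidx w i⟩
  set F : S → Option (Fin n) × (Fin n → Fin r) := fun w =>
    (if h : ∃ i : Fin n, get' w i = μ then some h.choose else none,
     fun i => e (get' w i)) with hFdef
  have muCase : ∀ (u v : S), (F u).1 = (F v).1 → ∀ i : Fin n,
      get' u i = μ → get' v i = μ := by
    intro u v hp i hui
    have hex : ∃ j : Fin n, get' u j = μ := ⟨i, hui⟩
    rw [hFdef] at hp
    simp only [dif_pos hex] at hp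
    have hex' : ∃ j : Fin n, get' v j = μ := by
      by_contra hno
      rw [dif_neg hno] at hp
      simp at hp
    rw [dif_pos hex'] at hp
    have hchoose : hex.choose = hex'.choose := by
      simpa using hp
    have h1 : hex.choose = i := hmark' u _ _ hex.choose_spec hui
    have := hex'.choose_spec
    rwa [← hchoose, h1] at this
  have hFinj : Function.Injective F := by
    intro w w' hww'
    have h1 : (F w).1 = (F w').1 := by rw [hww']
    have h2 : ∀ i, e (get' w i) = e (get' w' i) := by
      intro i
      have : (F w).2 = (F w').2 := by rw [hww']
      exact congrFun this i
    have key : ∀ i : Fin n, get' w i = get' w' i := by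
      intro i
      by_cases hwi : get' w i = μ
      · rw [hwi, muCase w w' h1 i hwi]
      · by_cases hw'i : get' w' i = μ
        · exact absurd (muCase w' w h1.symm i hw'i) hwi
        · have hl : get' w i ∈ L := (hletter' w i).resolve_left hwi
          have hl' : get' w' i ∈ L := (hletter' w' i).resolve_left hw'i
          exact hinjL hl hl' (h2 i)
    ext1
    apply List.ext_get (by rw [hlen _ w.2, hlen _ w'.2])
    intro i ha hb
    have := key ⟨i, by rw [hlen _ w.2] at ha; exact ha⟩
    simpa [hget'] using this
  have h1 := Nat.card_le_card_of_injective F hFinj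
  have h2 : Nat.card (Option (Fin n) × (Fin n → Fin r)) = (n + 1) * r ^ n := by
    rw [Nat.card_eq_fintype_card, Fintype.card_prod, Fintype.card_option,
      Fintype.card_fun, Fintype.card_fin, Fintype.card_fin]
  omega

/-- Lower bound via an injective family of words. -/
lemma le_card_words [Finite A] {S : Set (List A)} {n m c : ℕ}
    (hlen : ∀ w ∈ S, w.length = n)
    (ψ : (Fin m → Fin c) → List A) (hψS : ∀ v, ψ v ∈ S) (hψ : Function.Injective ψ) :
    c ^ m ≤ Nat.card S := by
  classical
  have : Finite ↥S := (words_finite hlen).to_subtype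
  have h2 : Function.Injective (fun v => (⟨ψ v, hψS v⟩ : S)) := by
    intro a b hab
    exact hψ (congrArg Subtype.val hab)
  have h3 := Nat.card_le_card_of_injective _ h2
  have h4 : Nat.card (Fin m → Fin c) = c ^ m := by
    rw [Nat.card_eq_fintype_card, Fintype.card_fun, Fintype.card_fin, Fintype.card_fin]
  exact le_trans (le_of_eq h4.symm) h3

end Words
section FolGeneric

variable {A : Type*}

lemma shift_mem {X : Set (ℤ → A)} (hX : shift '' X = X) {B : ℤ → A} (hB : B ∈ X) :
    shift B ∈ X := by
  rw [← hX]; exact ⟨B, hB, rfl⟩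

lemma fol_subset_tail {X : Set (ℤ → A)} (hX : shift '' X = X) (w : List A) (hw : w ≠ []) :
    fol X w ⊆ fol X w.tail := by
  rintro y ⟨B, hB, hm, hy⟩
  have hlen : 1 ≤ w.length := List.length_pos_iff.mpr hw
  refine ⟨shift B, shift_mem hX hB, ?_, ?_⟩
  · intro i
    have hi : (i : ℕ) + 1 < w.length := by
      have h2 := i.2
      have h3 := List.length_tail (l := w)
      omega
    have := hm ⟨(i : ℕ) + 1, hi⟩
    have hidx : ((i : ℕ) : ℤ) + 1 = (((i : ℕ) + 1 : ℕ) : ℤ) := by push_cast; ring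
    rw [List.get_tail]
    calc shift B ((i : ℕ) : ℤ) = B (((i : ℕ) : ℤ) + 1) := rfl
    _ = B ((((i : ℕ) + 1 : ℕ) : ℤ)) := by rw [hidx]
    _ = w.get ⟨(i : ℕ) + 1, hi⟩ := this
  · intro k
    rw [hy k]
    show B ((w.length : ℤ) - 1 + (k : ℤ)) = B ((w.tail.length : ℤ) - 1 + (k : ℤ) + 1)
    congr 1
    rw [List.length_tail]
    have : ((w.length - 1 : ℕ) : ℤ) = (w.length : ℤ) - 1 := by
      rw [Nat.cast_sub hlen]; simp
    rw [this]
    ring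

lemma hC_eq (X : Set (ℤ → A)) :
    hC X = Filter.limsup (fun n : ℕ => Real.log (Nat.card ↥(LC X n)) / (n : ℝ))
      Filter.atTop := by
  unfold hC
  apply Filter.limsup_congr
  filter_upwards with n
  rw [max_eq_right (log_nat_nonneg _)]

lemma ELC_subset_LC (X : Set (ℤ → A)) (n : ℕ) : ELC X n ⊆ LC X n :=
  fun w hw => ⟨hw.1, hw.2.1⟩

lemma LC_subset_Lang (X : Set (ℤ → A)) (n : ℕ) : LC X n ⊆ Lang X n := by
  rintro w ⟨hlen, hne, hfol, -⟩
  obtain ⟨y, B, hB, hm, -⟩ := Set.nonempty_iff_ne_empty.mpr hfol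
  refine ⟨hlen, B, hB, fun i => ?_⟩
  simpa using hm i

lemma log_card_div_le [Fintype A] {S : Set (List A)} {n : ℕ}
    (hlen : ∀ w ∈ S, w.length = n) :
    Real.log (Nat.card S) / n ≤ Real.log ((Fintype.card A + 1 : ℕ)) := by
  rcases Nat.eq_zero_or_pos n with rfl | hn
  · have h := log_nat_nonneg (Fintype.card A + 1)
    push_cast at h ⊢
    simpa using h
  · have h1 : Nat.card S ≤ (Fintype.card A + 1) ^ n := by
      calc Nat.card S ≤ Fintype.card A ^ n := card_words_le hlen
      _ ≤ (Fintype.card A + 1) ^ n := Nat.pow_le_pow_left (by omega) n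
    have h2 : Real.log (Nat.card S) ≤ (n : ℝ) * Real.log ((Fintype.card A + 1 : ℕ)) := by
      calc Real.log (Nat.card S) ≤ Real.log (((Fintype.card A + 1) ^ n : ℕ)) :=
        log_nat_mono h1
      _ = (n : ℝ) * Real.log ((Fintype.card A + 1 : ℕ)) := by
        push_cast
        rw [Real.log_pow]
    rw [div_le_iff₀ (by exact_mod_cast hn)]
    calc Real.log (Nat.card S) ≤ (n : ℝ) * Real.log ((Fintype.card A + 1 : ℕ)) := h2
    _ = Real.log ((Fintype.card A + 1 : ℕ)) * n := by ring

lemma div_cast_mono {a b : ℝ} (n : ℕ) (h : a ≤ b) : a / (n : ℝ) ≤ b / (n : ℝ) := by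
  rcases Nat.eq_zero_or_pos n with rfl | hn
  · simp
  · exact (div_le_div_iff_of_pos_right (by exact_mod_cast hn)).mpr h

/-- Part 1 of the theorem. -/
lemma part1 {A : Type} [Fintype A] (X : Set (ℤ → A)) :
    0 ≤ hCstar X ∧ hCstar X ≤ hC X ∧ hC X ≤ hTop X := by
  have hELClen : ∀ n, ∀ w ∈ ELC X n, w.length = n := fun n w hw => hw.1
  have hLClen : ∀ n, ∀ w ∈ LC X n, w.length = n := fun n w hw => hw.1
  have hLanglen : ∀ n, ∀ w ∈ Lang X n, w.length = n := fun n w hw => hw.1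
  have hstar_nonneg : ∀ n, 0 ≤ Real.log (Nat.card ↥(ELC X n)) / (n : ℝ) :=
    fun n => div_nonneg (log_nat_nonneg _) (by positivity)
  have hLC_nonneg : ∀ n, 0 ≤ Real.log (Nat.card ↥(LC X n)) / (n : ℝ) :=
    fun n => div_nonneg (log_nat_nonneg _) (by positivity)
  refine ⟨limsup_nonneg _ hstar_nonneg, ?_, ?_⟩
  · rw [hC_eq]
    apply Filter.limsup_le_limsup
    · filter_upwards with n
      exact div_cast_mono n (log_nat_mono
        (Nat.card_mono (words_finite (hLClen n)) (ELC_subset_LC X n)))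
    · exact Filter.IsBoundedUnder.isCoboundedUnder_le
        (Filter.isBoundedUnder_of ⟨0, hstar_nonneg⟩)
    · exact Filter.isBoundedUnder_of ⟨_, fun n => log_card_div_le (hLClen n)⟩
  · rw [hC_eq]
    unfold hTop
    apply Filter.limsup_le_limsup
    · filter_upwards with n
      exact div_cast_mono n (log_nat_mono
        (Nat.card_mono (words_finite (hLanglen n)) (LC_subset_Lang X n)))
    · exact Filter.IsBoundedUnder.isCoboundedUnder_le
        (Filter.isBoundedUnder_of ⟨0, hLC_nonneg⟩)
    · exact Filter.isBoundedUnder_of ⟨_, fun n => log_card_div_le (hLanglen n)⟩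

end FolGeneric
section PartThree

/-- The subshift over `Fin 5` consisting of sequences with at most one
occurrence of the marker letter `4`. -/
def X2 : Set (ℤ → Fin 5) := {x | ∀ p q : ℤ, x p = 4 → x q = 4 → p = q}

lemma X2_of_no_marker {B : ℤ → Fin 5} (h : ∀ p, B p ≠ 4) : B ∈ X2 :=
  fun p _ hp _ => absurd hp (h p)

lemma X2_of_marker {B : ℤ → Fin 5} (P : ℤ) (h : ∀ p, B p = 4 → p = P) : B ∈ X2 :=
  fun p q hp hq => by rw [h p hp, h q hq]

lemma X2_shift : shift '' X2 = X2 := by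
  apply Set.eq_of_subset_of_subset
  · rintro _ ⟨x, hx, rfl⟩ p q hp hq
    have := hx (p + 1) (q + 1) hp hq
    omega
  · intro x hx
    refine ⟨fun i => x (i - 1), fun p q hp hq => ?_, ?_⟩
    · have := hx (p - 1) (q - 1) hp hq
      omega
    · funext i
      show x (i + 1 - 1) = x i
      norm_num

lemma X2_subshift :
    letI : TopologicalSpace (Fin 5) := ⊥
    IsSubshift X2 := by
  letI : TopologicalSpace (Fin 5) := ⊥
  haveI : DiscreteTopology (Fin 5) := ⟨rfl⟩
  refine ⟨?_, X2_shift⟩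
  have hX : X2 = ⋂ (p : ℤ), ⋂ (q : ℤ),
      (fun x : ℤ → Fin 5 => (x p, x q)) ⁻¹'
        {ab : Fin 5 × Fin 5 | ab.1 = 4 → ab.2 = 4 → p = q} := by
    ext x
    simp only [Set.mem_iInter, Set.mem_preimage, Set.mem_setOf_eq]
    rfl
  rw [hX]
  exact isClosed_iInter fun p => isClosed_iInter fun q =>
    IsClosed.preimage ((continuous_apply p).prodMk (continuous_apply q))
      (isClosed_discrete _)

lemma rev_X2 : rev X2 = X2 := by
  apply Set.eq_of_subset_of_subset
  · rintro y ⟨x, hx, rfl⟩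
    intro p q hp hq
    have hp' : x (-p) = 4 := hp
    have hq' : x (-q) = 4 := hq
    have h2 := hx (-p) (-q) hp' hq'
    exact neg_inj.mp h2
  · intro x hx
    refine ⟨fun i => x (-i), fun p q hp hq => ?_, ?_⟩
    · have hp' : x (-p) = 4 := hp
      have hq' : x (-q) = 4 := hq
      have h2 := hx (-p) (-q) hp' hq'
      exact neg_inj.mp h2
    · funext i
      show x (- - i) = x i
      norm_num

end PartThree
section WordHelpers

variable {A : Type*}

lemma mem_fol {X : Set (ℤ → A)} {w : List A} {B : ℤ → A} (hB : B ∈ X)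
    (hm : ∀ (i : ℕ) (h : i < w.length), B i = w.get ⟨i, h⟩) :
    (fun k : ℕ => B ((w.length : ℤ) - 1 + k)) ∈ fol X w :=
  ⟨B, hB, fun i => hm i i.2, fun _ => rfl⟩

lemma wordOf_length (b : ℕ → A) (m : ℕ) : (wordOf b m).length = m + 1 := by
  simp [wordOf]

lemma wordOf_get (b : ℕ → A) (m : ℕ) (i : ℕ) (h : i < (wordOf b m).length) :
    (wordOf b m).get ⟨i, h⟩ = b (m - i) := by
  simp [wordOf, List.get_eq_getElem]

lemma get_ofFn' {n : ℕ} (F : Fin n → A) (i : ℕ) (h : i < (List.ofFn F).length) :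
    (List.ofFn F).get ⟨i, h⟩ = F ⟨i, by simpa using h⟩ := by
  rw [List.get_ofFn]
  rfl

end WordHelpers

section PartThreeB

def emb4 : Fin 4 → Fin 5 := Fin.castLE (by omega)

lemma emb4_ne (x : Fin 4) : emb4 x ≠ 4 := by
  intro h
  have h1 := congrArg Fin.val h
  simp [emb4] at h1
  have h2 := x.2
  omega

lemma emb4_inj : Function.Injective emb4 := Fin.castLE_injective _

lemma X2_cons_constraint (m : ℕ) (u : Fin (m + 1) → Fin 4) :
    IsLeftConstraint X2 (List.ofFn (Fin.cons 4 fun j => emb4 (u j))) := by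
  set F : Fin (m + 2) → Fin 5 := Fin.cons 4 fun j => emb4 (u j) with hF
  set w : List (Fin 5) := List.ofFn F with hw
  have hwlen : w.length = m + 2 := List.length_ofFn (f := F)
  have hget : ∀ (i : ℕ) (h : i < w.length), w.get ⟨i, h⟩ =
      F ⟨i, by rw [hwlen] at h; exact h⟩ := fun i h => get_ofFn' F i h
  have hF0 : ∀ (h : 0 < m + 2), F ⟨0, h⟩ = 4 := fun _ => rfl
  have hFpos : ∀ (i : ℕ) (h : i < m + 2), i ≠ 0 → F ⟨i, h⟩ ≠ 4 := by
    intro i h hi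
    obtain ⟨k, rfl⟩ := Nat.exists_eq_succ_of_ne_zero hi
    have hk : (⟨k + 1, h⟩ : Fin (m + 2)) = Fin.succ ⟨k, by omega⟩ := by
      ext; simp
    rw [hk, hF, Fin.cons_succ]
    exact emb4_ne _
  have htail : w.tail = List.ofFn (fun j : Fin (m + 1) => emb4 (u j)) := by
    rw [hw, hF, List.ofFn_succ]
    simp
  have htlen : w.tail.length = m + 1 := by rw [htail]; simp
  have hgett : ∀ (i : ℕ) (h : i < w.tail.length), w.tail.get ⟨i, h⟩ =
      emb4 (u ⟨i, by rw [htlen] at h; exact h⟩) := by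
    intro i h
    rw [List.get_of_eq htail ⟨i, h⟩]
    exact get_ofFn' _ i _
  have hne : w ≠ [] := by
    intro h; rw [h] at hwlen; simp at hwlen
  -- the word itself occurs
  set B1 : ℤ → Fin 5 := fun i =>
    if h : 0 ≤ i ∧ i < (m + 2 : ℤ) then F ⟨i.toNat, by omega⟩ else 0 with hB1
  have hB1X : B1 ∈ X2 := by
    apply X2_of_marker 0
    intro p hp
    by_cases hc : 0 ≤ p ∧ p < (m + 2 : ℤ)
    · have hp' : F ⟨p.toNat, by omega⟩ = 4 := by
        rw [hB1] at hp
        simpa [dif_pos hc] using hp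
      by_contra hp0
      exact hFpos p.toNat (by omega) (by omega) hp'
    · have hp' : (0 : Fin 5) = 4 := by
        rw [hB1] at hp
        simpa [dif_neg hc] using hp
      exact absurd hp' (by decide)
  have hm1 : ∀ (i : ℕ) (h : i < w.length), B1 i = w.get ⟨i, h⟩ := by
    intro i h
    have h' : i < m + 2 := by omega
    rw [hget i h, hB1]
    have hc : 0 ≤ (i : ℤ) ∧ (i : ℤ) < (m + 2 : ℤ) := by constructor <;> omega
    simp only [dif_pos hc]
    congr 1
    all_goals (ext; simp)
  refine ⟨hne, Set.nonempty_iff_ne_empty.mp ⟨_, mem_fol hB1X hm1⟩, ?_⟩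
  -- strictness
  set B2 : ℤ → Fin 5 := fun i =>
    if h : 0 ≤ i ∧ i < (m + 1 : ℤ) then emb4 (u ⟨i.toNat, by omega⟩)
    else if i = (m + 1 : ℤ) then 4 else 0 with hB2
  have hB2X : B2 ∈ X2 := by
    apply X2_of_marker (m + 1)
    intro p hp
    by_cases hc : 0 ≤ p ∧ p < (m + 1 : ℤ)
    · have hp' : emb4 (u ⟨p.toNat, by omega⟩) = 4 := by
        rw [hB2] at hp
        simpa only [dif_pos hc] using hp
      exact absurd hp' (emb4_ne _)
    · by_cases hc2 : p = (m + 1 : ℤ)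
      · exact hc2
      · have hp' : (0 : Fin 5) = 4 := by
          rw [hB2] at hp
          simpa only [dif_neg hc, if_neg hc2] using hp
        exact absurd hp' (by decide)
  have hm2 : ∀ (i : ℕ) (h : i < w.tail.length), B2 i = w.tail.get ⟨i, h⟩ := by
    intro i h
    have h' : i < m + 1 := by omega
    rw [hgett i h, hB2]
    have hc : 0 ≤ (i : ℤ) ∧ (i : ℤ) < (m + 1 : ℤ) := by constructor <;> omega
    simp only [dif_pos hc]
    congr 2
    all_goals (ext; simp)
  have hy2mem : (fun k : ℕ => B2 ((w.tail.length : ℤ) - 1 + k)) ∈ fol X2 w.tail :=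
    mem_fol hB2X hm2
  apply (Set.ssubset_iff_of_subset (fol_subset_tail X2_shift w hne)).mpr
  refine ⟨_, hy2mem, ?_⟩
  rintro ⟨B', hB', hm', hy'⟩
  have e1 : B' ((m + 2 : ℤ)) = 4 := by
    have h1 := hy' 1
    simp only [htlen, hwlen] at h1
    have hL : B2 (((m + 1 : ℕ) : ℤ) - 1 + ((1 : ℕ) : ℤ)) = 4 := by
      have hc : ¬(0 ≤ ((m + 1 : ℕ) : ℤ) - 1 + ((1 : ℕ) : ℤ) ∧
          ((m + 1 : ℕ) : ℤ) - 1 + ((1 : ℕ) : ℤ) < (m + 1 : ℤ)) := by push_cast; omega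
      simp only [hB2]
      rw [dif_neg hc, if_pos (by push_cast; ring)]
    rw [hL] at h1
    have hidx : ((m + 2 : ℕ) : ℤ) - 1 + ((1 : ℕ) : ℤ) = (m + 2 : ℤ) := by push_cast; ring
    rw [hidx] at h1
    exact h1.symm
  have e0 : B' 0 = 4 := by
    have h0 := hm' ⟨0, by omega⟩
    rw [hget 0 (by omega)] at h0
    rw [hF0 (by omega)] at h0
    simpa using h0
  have := hB' 0 (m + 2) e0 e1
  omega

end PartThreeB
section PartThreeC

lemma X2_not_constraint {w : List (Fin 5)} (hlen : 2 ≤ w.length)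
    (h0 : ∀ (h : 0 < w.length), w.get ⟨0, h⟩ ≠ 4) : ¬ IsLeftConstraint X2 w := by
  rintro ⟨hne, hfolne, hss⟩
  apply hss.not_subset
  rintro y ⟨B', hB', hm', hy'⟩
  set B : ℤ → Fin 5 := fun i =>
    if 1 ≤ i then B' (i - 1) else if i = 0 then w.get ⟨0, by omega⟩ else 0 with hB
  have hmark : ∀ p, B p = 4 → 1 ≤ p := by
    intro p hp
    by_cases hc : 1 ≤ p
    · exact hc
    · by_cases hc2 : p = 0
      · exfalso
        apply h0 (by omega)
        have : w.get ⟨0, by omega⟩ = 4 := by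
          rw [hB] at hp
          simpa [if_neg hc, if_pos hc2] using hp
        exact this
      · exfalso
        have : (0 : Fin 5) = 4 := by
          rw [hB] at hp
          simpa [if_neg hc, if_neg hc2] using hp
        exact absurd this (by decide)
  have hBX : B ∈ X2 := by
    intro p q hp hq
    have hp1 := hmark p hp
    have hq1 := hmark q hq
    have hp' : B' (p - 1) = 4 := by
      rw [hB] at hp
      simpa [if_pos hp1] using hp
    have hq' : B' (q - 1) = 4 := by
      rw [hB] at hq
      simpa [if_pos hq1] using hq
    have := hB' _ _ hp' hq'
    omega
  have hm : ∀ (i : ℕ) (h : i < w.length), B i = w.get ⟨i, h⟩ := by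
    intro i h
    rcases Nat.eq_zero_or_pos i with rfl | hi
    · rw [hB]
      norm_num
    · have hi1 : (1:ℤ) ≤ (i:ℤ) := by omega
      have hidx : ((i:ℤ)) - 1 = ((i - 1 : ℕ) : ℤ) := by push_cast; omega
      have htl : i - 1 < w.tail.length := by
        have := List.length_tail (l := w)
        omega
      have h2 := hm' ⟨i - 1, htl⟩
      have h3 : w.tail.get ⟨i - 1, htl⟩ = w.get ⟨i, h⟩ := by
        rw [List.get_tail]
        congr 1
        simp only [Fin.mk.injEq]
        omega
      rw [hB]
      show (if 1 ≤ (i:ℤ) then B' ((i:ℤ) - 1) else _) = w.get ⟨i, h⟩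
      rw [if_pos hi1, hidx, ← h3]
      exact h2
  refine ⟨B, hBX, fun i => hm i i.2, fun k => ?_⟩
  rw [hy' k]
  have h1 : (1:ℤ) ≤ (w.length : ℤ) - 1 + (k : ℤ) := by
    have := List.length_tail (l := w)
    omega
  have : B ((w.length : ℤ) - 1 + (k:ℤ)) = B' ((w.length : ℤ) - 1 + (k:ℤ) - 1) := by
    rw [hB]
    show (if 1 ≤ (w.length : ℤ) - 1 + (k:ℤ) then _ else _) = _
    rw [if_pos h1]
  rw [this]
  congr 1
  have := List.length_tail (l := w)
  have hc : ((w.tail.length : ℕ) : ℤ) = (w.length : ℤ) - 1 := by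
    rw [List.length_tail]
    push_cast [Nat.cast_sub (by omega : 1 ≤ w.length)]
    ring
  omega

lemma X2_constraint_head {w : List (Fin 5)} (hlen : 2 ≤ w.length)
    (hc : IsLeftConstraint X2 w) : ∀ (h : 0 < w.length), w.get ⟨0, h⟩ = 4 := by
  intro h
  by_contra h4
  exact X2_not_constraint hlen (fun _ => h4) hc

lemma X2_ELC_empty {n : ℕ} (hn : 2 ≤ n) : ELC X2 n = ∅ := by
  ext w
  simp only [ELC, Set.mem_setOf_eq, Set.mem_empty_iff_false, iff_false]
  rintro ⟨hlen, hcon, b, hb, hinf⟩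
  obtain ⟨m, hm, hconm⟩ := hinf n
  rw [hlen] at hb
  have h1 : b m = 4 := by
    have h := X2_constraint_head (by rw [wordOf_length]; omega) hconm
      (by rw [wordOf_length]; omega)
    rwa [wordOf_get, Nat.sub_zero] at h
  have h2 : b (n - 1) = 4 := by
    rw [← hb] at hcon
    have h := X2_constraint_head (by rw [wordOf_length]; omega) hcon
      (by rw [wordOf_length]; omega)
    rwa [wordOf_get, Nat.sub_zero] at h
  obtain ⟨y, B, hB, hmB, -⟩ := Set.nonempty_iff_ne_empty.mpr hconm.2.1
  have hi1 : 0 < (wordOf b m).length := by rw [wordOf_length]; omega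
  have hi2 : m - (n - 1) < (wordOf b m).length := by rw [wordOf_length]; omega
  have e1 : B 0 = 4 := by
    have h := hmB ⟨0, hi1⟩
    rw [wordOf_get, Nat.sub_zero, h1] at h
    simpa using h
  have e2 : B ((m - (n - 1) : ℕ) : ℤ) = 4 := by
    have h := hmB ⟨m - (n - 1), hi2⟩
    rw [wordOf_get] at h
    have : m - (m - (n - 1)) = n - 1 := by omega
    rw [this, h2] at h
    simpa using h
  have := hB _ _ e1 e2
  have : m - (n - 1) = 0 := by omega
  omega

lemma X2_Lang_struct {n : ℕ} {w : List (Fin 5)} (hw : w ∈ Lang X2 n) :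
    ∀ i j : Fin w.length, w.get i = 4 → w.get j = 4 → (i : ℕ) = (j : ℕ) := by
  obtain ⟨hlen, x, hx, hocc⟩ := hw
  intro i j hi hj
  have h1 : x (0 + ((i : ℕ) : ℤ)) = 4 := (hocc i).trans hi
  have h2 : x (0 + ((j : ℕ) : ℤ)) = 4 := (hocc j).trans hj
  have := hx _ _ h1 h2
  omega

lemma X2_LC_lower (m : ℕ) : 4 ^ (m + 1) ≤ Nat.card ↥(LC X2 (m + 2)) := by
  apply le_card_words (fun w hw => hw.1)
    (fun u : Fin (m + 1) → Fin 4 => List.ofFn (Fin.cons 4 fun j => emb4 (u j)))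
  · intro u
    exact ⟨by simp, X2_cons_constraint m u⟩
  · intro u u' h
    have h2 := List.ofFn_injective h
    funext j
    have h3 := congrFun h2 j.succ
    simp only [Fin.cons_succ] at h3
    exact emb4_inj h3

lemma X2_Lang_upper (n : ℕ) : Nat.card ↥(Lang X2 n) ≤ (n + 1) * 4 ^ n := by
  apply card_marker_words_le (μ := (4 : Fin 5))
    (e := fun a : Fin 5 => if h : (a : ℕ) < 4 then (⟨a, h⟩ : Fin 4) else 0)
    (L := {a : Fin 5 | a ≠ 4})
  · exact fun w hw => hw.1
  · exact fun w hw => X2_Lang_struct hw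
  · intro w _ i
    by_cases h : w.get i = 4
    · exact Or.inl h
    · exact Or.inr h
  · intro a ha b hb hab
    revert hab
    revert ha hb
    revert a b
    decide
  · simp

lemma X2_Lang_lower (n : ℕ) : 4 ^ n ≤ Nat.card ↥(Lang X2 n) := by
  apply le_card_words (fun w hw => hw.1)
    (fun v : Fin n → Fin 4 => List.ofFn (fun i => emb4 (v i)))
  · intro v
    refine ⟨by simp, ?_⟩
    set x : ℤ → Fin 5 := fun i =>
      if h : 0 ≤ i ∧ i < (n : ℤ) then emb4 (v ⟨i.toNat, by omega⟩) else 0 with hx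
    refine ⟨x, X2_of_no_marker ?_, ?_⟩
    · intro p hp
      by_cases hc : 0 ≤ p ∧ p < (n : ℤ)
      · have : emb4 (v ⟨p.toNat, by omega⟩) = 4 := by
          rw [hx] at hp
          simpa [dif_pos hc] using hp
        exact absurd this (emb4_ne _)
      · have : (0 : Fin 5) = 4 := by
          rw [hx] at hp
          simpa [dif_neg hc] using hp
        exact absurd this (by decide)
    · intro i
      have hilen : (i : ℕ) < n := by
        have := i.2
        simpa using this
      have hgi : (List.ofFn fun i => emb4 (v i)).get i = emb4 (v ⟨(i : ℕ), hilen⟩) := by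
        rw [List.get_ofFn]
        congr 1
      have hxi : x (0 + ((i : ℕ) : ℤ)) = emb4 (v ⟨(i : ℕ), hilen⟩) := by
        rw [hx]
        have hc : 0 ≤ (0 + ((i : ℕ) : ℤ)) ∧ (0 + ((i : ℕ) : ℤ)) < (n : ℤ) := by
          constructor <;> omega
        simp only [dif_pos hc]
        congr 1
        ext
        simp
      rw [hxi, hgi]
  · intro v v' h
    have h2 := List.ofFn_injective h
    funext j
    exact emb4_inj (congrFun h2 j)

end PartThreeC
section PartThreeD

lemma X2_hTop_ge : Real.log 4 ≤ hTop X2 := by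
  unfold hTop
  apply le_limsup_of_tendsto_le (g := fun _ : ℕ => Real.log 4) ?_ tendsto_const_nhds
    (fun n => log_card_div_le (fun w hw => hw.1))
  filter_upwards [Filter.eventually_ge_atTop 1] with n hn
  have h1 : Real.log ((4 ^ n : ℕ)) ≤ Real.log (Nat.card ↥(Lang X2 n)) :=
    log_nat_mono (X2_Lang_lower n)
  have h2 : Real.log ((4 ^ n : ℕ)) = n * Real.log 4 := by
    push_cast
    rw [Real.log_pow]
  have hn' : (n : ℝ) ≠ 0 := by
    have : (0:ℝ) < n := by exact_mod_cast hn
    positivity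
  calc Real.log 4 = ((n : ℝ) * Real.log 4) / n := by field_simp
  _ ≤ Real.log (Nat.card ↥(Lang X2 n)) / n := div_cast_mono n (h2 ▸ h1)

lemma X2_hTop_le : hTop X2 ≤ Real.log 4 := by
  unfold hTop
  have h4 : Real.log ((4:ℕ):ℝ) = Real.log 4 := by norm_num
  apply limsup_le_of_le_tendsto
    (fun n => div_nonneg (log_nat_nonneg _) (by positivity))
    ?_ (h4 ▸ tendsto_log_poly_pow (K := 1) (by norm_num) 4 (by norm_num))
  filter_upwards with n
  apply div_cast_mono
  calc Real.log (Nat.card ↥(Lang X2 n)) ≤ Real.log (((n + 1) * 4 ^ n : ℕ)) :=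
    log_nat_mono (X2_Lang_upper n)
  _ = Real.log (((n:ℝ) + 1) * (4:ℕ) ^ n) := by push_cast; ring_nf

lemma X2_hC_ge : Real.log 4 ≤ hC X2 := by
  rw [hC_eq]
  apply le_limsup_of_tendsto_le ?_ (tendsto_sub_one_mul_div (Real.log 4))
    (fun n => log_card_div_le (fun w hw => hw.1))
  filter_upwards [Filter.eventually_ge_atTop 2] with n hn
  have h0 : 4 ^ (n - 1) ≤ Nat.card ↥(LC X2 n) := by
    have := X2_LC_lower (n - 2)
    have he : n - 2 + 2 = n := by omega
    have he2 : n - 2 + 1 = n - 1 := by omega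
    rwa [he, he2] at this
  have h1 : Real.log ((4 ^ (n-1) : ℕ)) ≤ Real.log (Nat.card ↥(LC X2 n)) :=
    log_nat_mono h0
  have h2 : Real.log ((4 ^ (n-1) : ℕ)) = ((n:ℝ) - 1) * Real.log 4 := by
    rw [Nat.cast_pow, Real.log_pow, Nat.cast_sub (by omega : 1 ≤ n)]
    norm_num
  exact div_cast_mono n (h2 ▸ h1)

lemma X2_hCstar : hCstar X2 = 0 := by
  unfold hCstar
  have h : ∀ᶠ n in Filter.atTop,
      Real.log (Nat.card ↥(ELC X2 n)) / (n : ℝ) = (fun _ : ℕ => (0:ℝ)) n := by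
    filter_upwards [Filter.eventually_ge_atTop 2] with n hn
    rw [X2_ELC_empty hn]
    simp [Nat.card_coe_set_eq]
  rw [Filter.limsup_congr h, Filter.limsup_const]

lemma part3 : ∃ (A : Type) (_ : Fintype A) (X : Set (ℤ → A)),
    letI : TopologicalSpace A := ⊥
    IsWeakQFT X ∧ ¬ IsQFT X := by
  refine ⟨Fin 5, inferInstance, X2, ?_⟩
  letI : TopologicalSpace (Fin 5) := ⊥
  have hlog4 : (0:ℝ) < Real.log 4 := Real.log_pos (by norm_num)
  constructor
  · refine ⟨X2_subshift, ?_⟩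
    unfold hSCstar
    calc min (hCstar X2) (hCstar (rev X2)) ≤ hCstar X2 := min_le_left _ _
    _ = 0 := X2_hCstar
    _ < Real.log 4 := hlog4
    _ ≤ hTop X2 := X2_hTop_ge
  · rintro ⟨-, hlt⟩
    unfold hSC at hlt
    rw [rev_X2, min_self] at hlt
    exact absurd hlt (not_lt.mpr (le_trans X2_hTop_le X2_hC_ge))

end PartThreeD
section PartTwoA

/-- Letter classes on `Fin 16`: `{0,1,2}` (class 0, marker `2`),
`{3,…,7}` (class 1, marker `7`), `{8,…,15}` (class 2). -/
def cls (a : Fin 16) : ℕ := if (a : ℕ) < 3 then 0 else if (a : ℕ) < 8 then 1 else 2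

lemma cls_val0 {a : Fin 16} : cls a = 0 ↔ (a : ℕ) < 3 := by
  unfold cls; split_ifs <;> simp <;> omega

lemma cls_val1 {a : Fin 16} : cls a = 1 ↔ (3 ≤ (a : ℕ) ∧ (a : ℕ) < 8) := by
  unfold cls; split_ifs <;> simp <;> omega

lemma cls_val2 {a : Fin 16} : cls a = 2 ↔ 8 ≤ (a : ℕ) := by
  unfold cls; split_ifs <;> simp <;> omega

lemma cls_cases (a : Fin 16) : cls a = 0 ∨ cls a = 1 ∨ cls a = 2 := by
  unfold cls; split_ifs <;> simp <;> omega

/-- The union subshift over `Fin 16`: each element is a sequence using letters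
of one single class; markers `2` and `7` occur at most once; the marker `2`
forces zeros at all positions at distance a power of two in the past. -/
def XU : Set (ℤ → Fin 16) :=
  {x | (∀ p q : ℤ, cls (x p) = cls (x q)) ∧
       (∀ p q : ℤ, x p = 2 → x q = 2 → p = q) ∧
       (∀ p q : ℤ, x p = 7 → x q = 7 → p = q) ∧
       (∀ (p : ℤ) (k : ℕ), x p = 2 → x (p - 2 ^ k) = 0)}

lemma XU_shift : shift '' XU = XU := by
  apply Set.eq_of_subset_of_subset
  · rintro y ⟨x, ⟨hx1, hx2, hx3, hx4⟩, rfl⟩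
    refine ⟨fun p q => hx1 (p + 1) (q + 1), fun p q hp hq => ?_, fun p q hp hq => ?_, ?_⟩
    · have := hx2 (p + 1) (q + 1) hp hq; omega
    · have := hx3 (p + 1) (q + 1) hp hq; omega
    · intro p k hp
      have h2 := hx4 (p + 1) k hp
      show x (p - 2 ^ k + 1) = 0
      have : p - 2 ^ k + 1 = p + 1 - 2 ^ k := by ring
      rw [this]
      exact h2
  · intro x ⟨hx1, hx2, hx3, hx4⟩
    refine ⟨fun i => x (i - 1), ⟨fun p q => hx1 (p - 1) (q - 1), fun p q hp hq => ?_,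
      fun p q hp hq => ?_, ?_⟩, ?_⟩
    · have := hx2 (p - 1) (q - 1) hp hq; omega
    · have := hx3 (p - 1) (q - 1) hp hq; omega
    · intro p k hp
      have h2 := hx4 (p - 1) k hp
      show x (p - 2 ^ k - 1) = 0
      have : p - 2 ^ k - 1 = p - 1 - 2 ^ k := by ring
      rw [this]
      exact h2
    · funext i
      show x (i + 1 - 1) = x i
      norm_num

lemma XU_subshift :
    letI : TopologicalSpace (Fin 16) := ⊥
    IsSubshift XU := by
  letI : TopologicalSpace (Fin 16) := ⊥
  haveI : DiscreteTopology (Fin 16) := ⟨rfl⟩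
  refine ⟨?_, XU_shift⟩
  have hXU : XU = (⋂ (p : ℤ), ⋂ (q : ℤ),
      (fun x : ℤ → Fin 16 => (x p, x q)) ⁻¹' {ab | cls ab.1 = cls ab.2}) ∩
      ((⋂ (p : ℤ), ⋂ (q : ℤ),
      (fun x : ℤ → Fin 16 => (x p, x q)) ⁻¹' {ab | ab.1 = 2 → ab.2 = 2 → p = q}) ∩
      ((⋂ (p : ℤ), ⋂ (q : ℤ),
      (fun x : ℤ → Fin 16 => (x p, x q)) ⁻¹' {ab | ab.1 = 7 → ab.2 = 7 → p = q}) ∩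
      (⋂ (p : ℤ), ⋂ (k : ℕ),
      (fun x : ℤ → Fin 16 => (x p, x (p - 2 ^ k))) ⁻¹' {ab | ab.1 = 2 → ab.2 = 0}))) := by
    ext x
    simp only [Set.mem_inter_iff, Set.mem_iInter, Set.mem_preimage, Set.mem_setOf_eq]
    constructor
    · rintro ⟨h1, h2, h3, h4⟩
      exact ⟨h1, fun p q => h2 p q, fun p q => h3 p q, fun p k hp => h4 p k hp⟩
    · rintro ⟨h1, h2, h3, h4⟩
      exact ⟨h1, h2, h3, fun p k hp => h4 p k hp⟩
  rw [hXU]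
  have hcl : ∀ (p q : ℤ) (s : Set (Fin 16 × Fin 16)),
      IsClosed ((fun x : ℤ → Fin 16 => (x p, x q)) ⁻¹' s) := fun p q s =>
    IsClosed.preimage ((continuous_apply p).prodMk (continuous_apply q))
      (isClosed_discrete _)
  exact IsClosed.inter (isClosed_iInter fun p => isClosed_iInter fun q => hcl _ _ _)
    (IsClosed.inter (isClosed_iInter fun p => isClosed_iInter fun q => hcl _ _ _)
      (IsClosed.inter (isClosed_iInter fun p => isClosed_iInter fun q => hcl _ _ _)
        (isClosed_iInter fun p => isClosed_iInter fun k => hcl _ _ _)))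

end PartTwoA
section PartTwoB

/-- Class-1 non-marker letters `3,4,5,6`. -/
def c1 : Fin 4 → Fin 16 := fun v => ⟨(v : ℕ) + 3, by omega⟩

lemma c1_ne7 (v : Fin 4) : c1 v ≠ 7 := by
  intro h
  have h1 := congrArg Fin.val h
  simp [c1] at h1
  have := v.2
  omega

lemma c1_ne2 (v : Fin 4) : c1 v ≠ 2 := by
  intro h
  have h1 := congrArg Fin.val h
  simp [c1] at h1

lemma c1_cls (v : Fin 4) : cls (c1 v) = 1 := by
  apply cls_val1.mpr
  have := v.2
  simp [c1]
  omega

lemma c1_inj : Function.Injective c1 := by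
  intro a b h
  have h1 := congrArg Fin.val h
  simp [c1] at h1
  exact Fin.ext h1

lemma XU_mem_c1 {B : ℤ → Fin 16} (hcls : ∀ p, cls (B p) = 1) (h2 : ∀ p, B p ≠ 2)
    (P : ℤ) (h7 : ∀ p, B p = 7 → p = P) : B ∈ XU :=
  ⟨fun p q => by rw [hcls p, hcls q], fun p q hp _ => absurd hp (h2 p),
   fun p q hp hq => by rw [h7 p hp, h7 q hq], fun p _ hp => absurd hp (h2 p)⟩

lemma XU_c1_constraint (m : ℕ) (u : Fin (m + 1) → Fin 4) :
    IsLeftConstraint XU (List.ofFn (Fin.cons 7 fun j => c1 (u j))) := by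
  set F : Fin (m + 2) → Fin 16 := Fin.cons 7 fun j => c1 (u j) with hF
  set w : List (Fin 16) := List.ofFn F with hw
  have hwlen : w.length = m + 2 := List.length_ofFn (f := F)
  have hget : ∀ (i : ℕ) (h : i < w.length), w.get ⟨i, h⟩ =
      F ⟨i, by rw [hwlen] at h; exact h⟩ := fun i h => get_ofFn' F i h
  have hF0 : ∀ (h : 0 < m + 2), F ⟨0, h⟩ = 7 := fun _ => rfl
  have hFcls : ∀ j, cls (F j) = 1 := by
    intro j
    induction j using Fin.cases with
    | zero => rw [hF, Fin.cons_zero]; decide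
    | succ i => rw [hF, Fin.cons_succ]; exact c1_cls _
  have hFne2 : ∀ j, F j ≠ 2 := by
    intro j
    induction j using Fin.cases with
    | zero => rw [hF, Fin.cons_zero]; decide
    | succ i => rw [hF, Fin.cons_succ]; exact c1_ne2 _
  have hFpos : ∀ (i : ℕ) (h : i < m + 2), i ≠ 0 → F ⟨i, h⟩ ≠ 7 := by
    intro i h hi
    obtain ⟨k, rfl⟩ := Nat.exists_eq_succ_of_ne_zero hi
    have hk : (⟨k + 1, h⟩ : Fin (m + 2)) = Fin.succ ⟨k, by omega⟩ := by
      ext; simp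
    rw [hk, hF, Fin.cons_succ]
    exact c1_ne7 _
  have htail : w.tail = List.ofFn (fun j : Fin (m + 1) => c1 (u j)) := by
    rw [hw, hF, List.ofFn_succ]
    simp
  have htlen : w.tail.length = m + 1 := by rw [htail]; simp
  have hgett : ∀ (i : ℕ) (h : i < w.tail.length), w.tail.get ⟨i, h⟩ =
      c1 (u ⟨i, by rw [htlen] at h; exact h⟩) := by
    intro i h
    rw [List.get_of_eq htail ⟨i, h⟩]
    exact get_ofFn' _ i _
  have hne : w ≠ [] := by
    intro h; rw [h] at hwlen; simp at hwlen
  set B1 : ℤ → Fin 16 := fun i =>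
    if h : 0 ≤ i ∧ i < (m + 2 : ℤ) then F ⟨i.toNat, by omega⟩ else 3 with hB1
  have hB1X : B1 ∈ XU := by
    refine XU_mem_c1 ?_ ?_ 0 ?_
    · intro p
      by_cases hc : 0 ≤ p ∧ p < (m + 2 : ℤ)
      · rw [hB1]; simpa [dif_pos hc] using hFcls _
      · rw [hB1]; simp [dif_neg hc]; decide
    · intro p hp
      by_cases hc : 0 ≤ p ∧ p < (m + 2 : ℤ)
      · refine hFne2 ⟨p.toNat, by omega⟩ ?_
        rw [hB1] at hp
        simpa [dif_pos hc] using hp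
      · have : (3 : Fin 16) = 2 := by
          rw [hB1] at hp
          simpa [dif_neg hc] using hp
        exact absurd this (by decide)
    · intro p hp
      by_cases hc : 0 ≤ p ∧ p < (m + 2 : ℤ)
      · have hp' : F ⟨p.toNat, by omega⟩ = 7 := by
          rw [hB1] at hp
          simpa [dif_pos hc] using hp
        by_contra hp0
        exact hFpos p.toNat (by omega) (by omega) hp'
      · have : (3 : Fin 16) = 7 := by
          rw [hB1] at hp
          simpa [dif_neg hc] using hp
        exact absurd this (by decide)
  have hm1 : ∀ (i : ℕ) (h : i < w.length), B1 i = w.get ⟨i, h⟩ := by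
    intro i h
    have h' : i < m + 2 := by omega
    rw [hget i h, hB1]
    have hc : 0 ≤ (i : ℤ) ∧ (i : ℤ) < (m + 2 : ℤ) := by constructor <;> omega
    simp only [dif_pos hc]
    congr 1
    all_goals (ext; simp)
  refine ⟨hne, Set.nonempty_iff_ne_empty.mp ⟨_, mem_fol hB1X hm1⟩, ?_⟩
  set B2 : ℤ → Fin 16 := fun i =>
    if h : 0 ≤ i ∧ i < (m + 1 : ℤ) then c1 (u ⟨i.toNat, by omega⟩)
    else if i = (m + 1 : ℤ) then 7 else 3 with hB2
  have hB2X : B2 ∈ XU := by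
    refine XU_mem_c1 ?_ ?_ (m + 1) ?_
    · intro p
      by_cases hc : 0 ≤ p ∧ p < (m + 1 : ℤ)
      · rw [hB2]; simpa only [dif_pos hc] using c1_cls _
      · by_cases hc2 : p = (m + 1 : ℤ)
        · rw [hB2]; simp only [dif_neg hc, if_pos hc2]; decide
        · rw [hB2]; simp only [dif_neg hc, if_neg hc2]; decide
    · intro p hp
      by_cases hc : 0 ≤ p ∧ p < (m + 1 : ℤ)
      · refine c1_ne2 (u ⟨p.toNat, by omega⟩) ?_
        rw [hB2] at hp
        simpa only [dif_pos hc] using hp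
      · by_cases hc2 : p = (m + 1 : ℤ)
        · have : (7 : Fin 16) = 2 := by
            rw [hB2] at hp
            simpa only [dif_neg hc, if_pos hc2] using hp
          exact absurd this (by decide)
        · have : (3 : Fin 16) = 2 := by
            rw [hB2] at hp
            simpa only [dif_neg hc, if_neg hc2] using hp
          exact absurd this (by decide)
    · intro p hp
      by_cases hc : 0 ≤ p ∧ p < (m + 1 : ℤ)
      · have hp' : c1 (u ⟨p.toNat, by omega⟩) = 7 := by
          rw [hB2] at hp
          simpa only [dif_pos hc] using hp
        exact absurd hp' (c1_ne7 _)
      · by_cases hc2 : p = (m + 1 : ℤ)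
        · exact hc2
        · have : (3 : Fin 16) = 7 := by
            rw [hB2] at hp
            simpa only [dif_neg hc, if_neg hc2] using hp
          exact absurd this (by decide)
  have hm2 : ∀ (i : ℕ) (h : i < w.tail.length), B2 i = w.tail.get ⟨i, h⟩ := by
    intro i h
    have h' : i < m + 1 := by omega
    rw [hgett i h, hB2]
    have hc : 0 ≤ (i : ℤ) ∧ (i : ℤ) < (m + 1 : ℤ) := by constructor <;> omega
    simp only [dif_pos hc]
    congr 2
    all_goals (ext; simp)
  have hy2mem : (fun k : ℕ => B2 ((w.tail.length : ℤ) - 1 + k)) ∈ fol XU w.tail :=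
    mem_fol hB2X hm2
  apply (Set.ssubset_iff_of_subset (fol_subset_tail XU_shift w hne)).mpr
  refine ⟨_, hy2mem, ?_⟩
  rintro ⟨B', hB', hm', hy'⟩
  have e1 : B' ((m + 2 : ℤ)) = 7 := by
    have h1 := hy' 1
    simp only [htlen, hwlen] at h1
    have hL : B2 (((m + 1 : ℕ) : ℤ) - 1 + ((1 : ℕ) : ℤ)) = 7 := by
      have hc : ¬(0 ≤ ((m + 1 : ℕ) : ℤ) - 1 + ((1 : ℕ) : ℤ) ∧
          ((m + 1 : ℕ) : ℤ) - 1 + ((1 : ℕ) : ℤ) < (m + 1 : ℤ)) := by push_cast; omega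
      simp only [hB2]
      rw [dif_neg hc, if_pos (by push_cast; ring)]
    rw [hL] at h1
    have hidx : ((m + 2 : ℕ) : ℤ) - 1 + ((1 : ℕ) : ℤ) = (m + 2 : ℤ) := by push_cast; ring
    rw [hidx] at h1
    exact h1.symm
  have e0 : B' 0 = 7 := by
    have h0 := hm' ⟨0, by omega⟩
    rw [hget 0 (by omega)] at h0
    rw [hF0 (by omega)] at h0
    simpa using h0
  have := hB'.2.2.1 0 (m + 2) e0 e1
  omega

end PartTwoB
section PartTwoC

lemma XU_mem_c0' {B : ℤ → Fin 16} (hcls : ∀ p, cls (B p) = 0)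
    (h7 : ∀ p, B p ≠ 7) (h2 : ∀ p, B p ≠ 2) : B ∈ XU :=
  ⟨fun p q => by rw [hcls p, hcls q], fun p _ hp => absurd hp (h2 p),
   fun p _ hp => absurd hp (h7 p), fun p _ hp => absurd hp (h2 p)⟩

lemma two_pow_cast (k : ℕ) : ((2 ^ k : ℕ) : ℤ) = (2 : ℤ) ^ k := by push_cast; ring

lemma XU_c0_constraint {w : List (Fin 16)} (hlen : 2 ≤ w.length)
    (hbits : ∀ (i : ℕ) (h : i < w.length), w.get ⟨i, h⟩ = 0 ∨ w.get ⟨i, h⟩ = 1)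
    (h0 : ∀ (h : 0 < w.length), w.get ⟨0, h⟩ = 1) :
    IsLeftConstraint XU w := by
  have hne : w ≠ [] := by
    intro h; rw [h] at hlen; simp at hlen
  have hbne2 : ∀ (i : ℕ) (h : i < w.length), w.get ⟨i, h⟩ ≠ 2 := by
    intro i h
    rcases hbits i h with h1 | h1 <;> rw [h1] <;> decide
  have hbne7 : ∀ (i : ℕ) (h : i < w.length), w.get ⟨i, h⟩ ≠ 7 := by
    intro i h
    rcases hbits i h with h1 | h1 <;> rw [h1] <;> decide
  have hbcls : ∀ (i : ℕ) (h : i < w.length), cls (w.get ⟨i, h⟩) = 0 := by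
    intro i h
    rcases hbits i h with h1 | h1 <;> rw [h1] <;> decide
  set n := w.length with hn
  -- occurrence
  set B1 : ℤ → Fin 16 := fun i =>
    if h : 0 ≤ i ∧ i < (n : ℤ) then w.get ⟨i.toNat, by omega⟩ else 0 with hB1
  have hB1X : B1 ∈ XU := by
    refine XU_mem_c0' ?_ ?_ ?_
    · intro p
      by_cases hc : 0 ≤ p ∧ p < (n : ℤ)
      · rw [hB1]; simpa [dif_pos hc] using hbcls p.toNat (by omega)
      · rw [hB1]; simp [dif_neg hc]; decide
    · intro p hp
      by_cases hc : 0 ≤ p ∧ p < (n : ℤ)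
      · refine hbne7 p.toNat (by omega) ?_
        rw [hB1] at hp
        simpa [dif_pos hc] using hp
      · have : (0 : Fin 16) = 7 := by
          rw [hB1] at hp
          simpa [dif_neg hc] using hp
        exact absurd this (by decide)
    · intro p hp
      by_cases hc : 0 ≤ p ∧ p < (n : ℤ)
      · refine hbne2 p.toNat (by omega) ?_
        rw [hB1] at hp
        simpa [dif_pos hc] using hp
      · have : (0 : Fin 16) = 2 := by
          rw [hB1] at hp
          simpa [dif_neg hc] using hp
        exact absurd this (by decide)
  have hm1 : ∀ (i : ℕ) (h : i < w.length), B1 i = w.get ⟨i, h⟩ := by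
    intro i h
    rw [hB1]
    have hc : 0 ≤ (i : ℤ) ∧ (i : ℤ) < (n : ℤ) := by constructor <;> omega
    simp only [dif_pos hc]
    congr 1
    all_goals (simp only [Fin.mk.injEq]; omega)
  refine ⟨hne, Set.nonempty_iff_ne_empty.mp ⟨_, mem_fol hB1X hm1⟩, ?_⟩
  -- strictness witness
  have hn2 : (n : ℤ) < 2 ^ n := by exact_mod_cast (Nat.lt_two_pow_self (n := n))
  have h2n1 : (2 : ℤ) ^ (n + 1) = 2 * 2 ^ n := by ring
  set Q : ℤ := 2 ^ (n + 1) - 1 with hQ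
  have hQk : ∀ k : ℕ, ¬(0 ≤ Q - 2 ^ k ∧ Q - 2 ^ k < (n : ℤ) - 1) ∧ Q - 2 ^ k ≠ Q := by
    intro k
    have hpk : (0 : ℤ) < 2 ^ k := by positivity
    constructor
    · rintro ⟨ha, hb⟩
      have hk_gt : (2 : ℤ) ^ n < 2 ^ k := by omega
      have hkn : n + 1 ≤ k := by
        by_contra hkn
        have hkn' : k ≤ n := by omega
        have := pow_le_pow_right₀ (by norm_num : (1 : ℤ) ≤ 2) hkn'
        omega
      have := pow_le_pow_right₀ (by norm_num : (1 : ℤ) ≤ 2) hkn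
      omega
    · omega
  set B2 : ℤ → Fin 16 := fun i =>
    if h : 0 ≤ i ∧ i < (n : ℤ) - 1 then w.get ⟨i.toNat + 1, by omega⟩
    else if i = Q then 2 else 0 with hB2
  have hB2val : ∀ p : ℤ, B2 p = 2 → p = Q := by
    intro p hp
    by_cases hc : 0 ≤ p ∧ p < (n : ℤ) - 1
    · exfalso
      refine hbne2 (p.toNat + 1) (by omega) ?_
      rw [hB2] at hp
      simpa [dif_pos hc] using hp
    · by_cases hc2 : p = Q
      · exact hc2
      · exfalso
        have : (0 : Fin 16) = 2 := by
          rw [hB2] at hp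
          simpa [dif_neg hc, if_neg hc2] using hp
        exact absurd this (by decide)
  have hB2X : B2 ∈ XU := by
    refine ⟨?_, ?_, ?_, ?_⟩
    · have hc0 : ∀ p, cls (B2 p) = 0 := by
        intro p
        by_cases hc : 0 ≤ p ∧ p < (n : ℤ) - 1
        · rw [hB2]; simpa [dif_pos hc] using hbcls (p.toNat + 1) (by omega)
        · by_cases hc2 : p = Q
          · rw [hB2]; simp [dif_neg hc, if_pos hc2]; decide
          · rw [hB2]; simp [dif_neg hc, if_neg hc2]; decide
      intro p q
      rw [hc0 p, hc0 q]
    · intro p q hp hq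
      rw [hB2val p hp, hB2val q hq]
    · intro p q hp _
      exfalso
      by_cases hc : 0 ≤ p ∧ p < (n : ℤ) - 1
      · refine hbne7 (p.toNat + 1) (by omega) ?_
        rw [hB2] at hp
        simpa [dif_pos hc] using hp
      · by_cases hc2 : p = Q
        · have : (2 : Fin 16) = 7 := by
            rw [hB2] at hp
            simpa [dif_neg hc, if_pos hc2] using hp
          exact absurd this (by decide)
        · have : (0 : Fin 16) = 7 := by
            rw [hB2] at hp
            simpa [dif_neg hc, if_neg hc2] using hp
          exact absurd this (by decide)
    · intro p k hp
      have hpQ : p = Q := hB2val p hp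
      rw [hpQ]
      simp only [hB2]
      rw [dif_neg (hQk k).1, if_neg (hQk k).2]
  have htlen : w.tail.length = n - 1 := List.length_tail (l := w)
  have hm2 : ∀ (i : ℕ) (h : i < w.tail.length), B2 i = w.tail.get ⟨i, h⟩ := by
    intro i h
    have hi : i < n - 1 := by omega
    have hgt : w.tail.get ⟨i, h⟩ = w.get ⟨i + 1, by omega⟩ := by
      rw [List.get_tail]
    rw [hgt, hB2]
    have hc : 0 ≤ (i : ℤ) ∧ (i : ℤ) < (n : ℤ) - 1 := by constructor <;> omega
    simp only [dif_pos hc]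
    congr 1
    all_goals (simp only [Fin.mk.injEq]; omega)
  have hy2mem : (fun k : ℕ => B2 ((w.tail.length : ℤ) - 1 + k)) ∈ fol XU w.tail :=
    mem_fol hB2X hm2
  apply (Set.ssubset_iff_of_subset (fol_subset_tail XU_shift w hne)).mpr
  refine ⟨_, hy2mem, ?_⟩
  rintro ⟨B', hB', hm', hy'⟩
  set k₀ : ℕ := 2 ^ (n + 1) + 1 - n with hk₀
  have hnpow : n < 2 ^ (n + 1) := by
    have := (Nat.lt_two_pow_self (n := n))
    have : 2 ^ n < 2 ^ (n + 1) := by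
      have : 2 ^ (n + 1) = 2 * 2 ^ n := by ring
      omega
    omega
  have hk₀c : ((k₀ : ℕ) : ℤ) = 2 ^ (n + 1) + 1 - (n : ℤ) := by
    rw [hk₀]
    rw [Nat.cast_sub (by omega)]
    push_cast
    ring
  have h2pos : (0 : ℤ) < 2 ^ n := by positivity
  have hQrange : ¬(0 ≤ Q ∧ Q < (n : ℤ) - 1) := by
    rw [hQ]
    omega
  have hyQ : B2 ((w.tail.length : ℤ) - 1 + (k₀ : ℤ)) = 2 := by
    have hidx : ((w.tail.length : ℕ) : ℤ) - 1 + (k₀ : ℤ) = Q := by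
      rw [htlen, Nat.cast_sub (by omega : 1 ≤ n), hk₀c, hQ]
      push_cast
      ring
    rw [hidx]
    simp only [hB2]
    rw [dif_neg hQrange]
    norm_num
  have hB'Q : B' ((2 : ℤ) ^ (n + 1)) = 2 := by
    have h1 := hy' k₀
    simp only at h1
    rw [hyQ] at h1
    have hidx : ((w.length : ℕ) : ℤ) - 1 + (k₀ : ℤ) = (2 : ℤ) ^ (n + 1) := by
      rw [← hn, hk₀c]
      push_cast
      ring
    rw [hidx] at h1
    exact h1.symm
  have hrule := hB'.2.2.2 ((2 : ℤ) ^ (n + 1)) (n + 1) hB'Q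
  have hzero : B' 0 = 0 := by
    have : (2 : ℤ) ^ (n + 1) - 2 ^ (n + 1) = 0 := by ring
    rwa [this] at hrule
  have hone : B' 0 = 1 := by
    have hh := hm' ⟨0, by omega⟩
    have := h0 (by omega)
    rw [this] at hh
    simpa using hh
  rw [hzero] at hone
  exact absurd hone (by decide)

def eb : Fin 2 → Fin 16 := Fin.castLE (by omega)

lemma eb_bits : ∀ x : Fin 2, eb x = 0 ∨ eb x = 1 := by decide

lemma eb_inj : Function.Injective eb := Fin.castLE_injective _

lemma XU_c0_extendable (m : ℕ) (v : Fin (m + 1) → Fin 2) :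
    List.ofFn (Fin.cons 1 fun j => eb (v j)) ∈ ELC XU (m + 2) := by
  set F : Fin (m + 2) → Fin 16 := Fin.cons 1 fun j => eb (v j) with hF
  set w : List (Fin 16) := List.ofFn F with hw
  have hwlen : w.length = m + 2 := List.length_ofFn (f := F)
  have hget : ∀ (i : ℕ) (h : i < w.length), w.get ⟨i, h⟩ =
      F ⟨i, by rw [hwlen] at h; exact h⟩ := fun i h => get_ofFn' F i h
  have hFbits : ∀ j, F j = 0 ∨ F j = 1 := by
    intro j
    induction j using Fin.cases with
    | zero => rw [hF, Fin.cons_zero]; right; rfl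
    | succ i => rw [hF, Fin.cons_succ]; exact eb_bits _
  have hbits : ∀ (i : ℕ) (h : i < w.length), w.get ⟨i, h⟩ = 0 ∨ w.get ⟨i, h⟩ = 1 := by
    intro i h
    rw [hget i h]
    exact hFbits _
  have h0 : ∀ (h : 0 < w.length), w.get ⟨0, h⟩ = 1 := by
    intro h
    rw [hget 0 h]
    rfl
  set b : ℕ → Fin 16 := fun j =>
    if h : j < m + 2 then w.get ⟨m + 1 - j, by omega⟩ else 1 with hb
  refine ⟨hwlen, XU_c0_constraint (by omega) hbits h0, b, ?_, ?_⟩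
  · -- wordOf b (w.length - 1) = w
    apply List.ext_get
    · rw [wordOf_length, hwlen]
      omega
    · intro i h1 h2
      have hi : i < m + 2 := by
        rw [wordOf_length, hwlen] at h1
        omega
      rw [wordOf_get]
      have hle : w.length - 1 - i < m + 2 := by omega
      rw [hb]
      simp only [dif_pos hle]
      congr 1
      simp only [Fin.mk.injEq]
      omega
  · intro N
    refine ⟨N + m + 2, by omega, ?_⟩
    apply XU_c0_constraint
    · rw [wordOf_length]; omega
    · intro i h
      rw [wordOf_get]
      rw [hb]
      by_cases hc : N + m + 2 - i < m + 2
      · simp only [dif_pos hc]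
        exact hbits _ _
      · simp only [dif_neg hc]
        right; trivial
    · intro h
      rw [wordOf_get, Nat.sub_zero, hb]
      simp only [dif_neg (by omega : ¬ N + m + 2 < m + 2)]

end PartTwoC
section PartTwoD

lemma fin16_lt3 (a : Fin 16) (h : (a : ℕ) < 3) : a = 2 ∨ a = 0 ∨ a = 1 := by
  have hv : (a : ℕ) = 0 ∨ (a : ℕ) = 1 ∨ (a : ℕ) = 2 := by omega
  rcases hv with h1 | h1 | h1
  · right; left; exact Fin.ext (by simpa using h1)
  · right; right; exact Fin.ext (by simpa using h1)
  · left; exact Fin.ext (by simpa using h1)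

lemma XU_not_constraint {w : List (Fin 16)} (hlen : 2 ≤ w.length)
    (hletters : ∀ (i : ℕ) (h : i < w.length), 3 ≤ ((w.get ⟨i, h⟩ : Fin 16) : ℕ))
    (hclsconst : ∀ (i : ℕ) (h : i < w.length),
        cls (w.get ⟨i, h⟩) = cls (w.get ⟨0, by omega⟩))
    (h0 : ∀ (h : 0 < w.length), w.get ⟨0, h⟩ ≠ 7) : ¬ IsLeftConstraint XU w := by
  rintro ⟨hne, hfolne, hss⟩
  apply hss.not_subset
  rintro y ⟨B', hB', hm', hy'⟩
  set c := cls (w.get ⟨0, by omega⟩) with hc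
  have hc12 : c = 1 ∨ c = 2 := by
    rcases cls_cases (w.get ⟨0, by omega⟩) with h | h | h
    · exfalso
      have h1 := cls_val0.mp h
      have h2 := hletters 0 (by omega)
      omega
    · left; rw [hc, h]
    · right; rw [hc, h]
  have hβ : ∃ β : Fin 16, cls β = c ∧ β ≠ 2 ∧ β ≠ 7 := by
    rcases hc12 with h | h
    · exact ⟨3, by rw [h]; decide, by decide, by decide⟩
    · exact ⟨8, by rw [h]; decide, by decide, by decide⟩
  obtain ⟨β, hβc, hβ2, hβ7⟩ := hβ
  have htl : 0 < w.tail.length := by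
    have := List.length_tail (l := w)
    omega
  have hB'cls : ∀ p, cls (B' p) = c := by
    intro p
    have h1 := hB'.1 p 0
    have h2 := hm' ⟨0, htl⟩
    have h3 : w.tail.get ⟨0, htl⟩ = w.get ⟨1, by omega⟩ := by
      rw [List.get_tail]
    have h4 : cls (w.get ⟨1, by omega⟩) = c := hclsconst 1 (by omega)
    rw [h1]
    have h5 : ((0 : ℕ) : ℤ) = (0 : ℤ) := rfl
    calc cls (B' 0) = cls (w.tail.get ⟨0, htl⟩) := by
          rw [← h2]; norm_num
    _ = c := by rw [h3, h4]
  have hB'2 : ∀ p, B' p ≠ 2 := by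
    intro p h
    have h1 := hB'cls p
    rw [h] at h1
    have : cls (2 : Fin 16) = 0 := by decide
    omega
  have hw0ne2 : w.get ⟨0, by omega⟩ ≠ 2 := by
    intro h
    have h2 := hletters 0 (by omega)
    rw [h] at h2
    have : ((2 : Fin 16) : ℕ) = 2 := rfl
    omega
  set B : ℤ → Fin 16 := fun i =>
    if 1 ≤ i then B' (i - 1) else if i = 0 then w.get ⟨0, by omega⟩ else β with hB
  have hBval : ∀ p, (1 ≤ p → B p = B' (p - 1)) ∧ (p = 0 → B p = w.get ⟨0, by omega⟩) ∧
      (p < 0 → B p = β) := by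
    intro p
    refine ⟨fun h => ?_, fun h => ?_, fun h => ?_⟩
    · rw [hB]; simp only [if_pos h]
    · rw [hB]; simp only [if_neg (by omega : ¬ (1:ℤ) ≤ p), if_pos h]
    · rw [hB]; simp only [if_neg (by omega : ¬ (1:ℤ) ≤ p), if_neg (by omega : ¬ p = 0)]
  have hBcls : ∀ p, cls (B p) = c := by
    intro p
    rcases lt_trichotomy p 0 with h | h | h
    · rw [(hBval p).2.2 h, hβc]
    · rw [(hBval p).2.1 h]
    · rw [(hBval p).1 (by omega)]
      exact hB'cls _
  have hB2 : ∀ p, B p ≠ 2 := by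
    intro p
    rcases lt_trichotomy p 0 with h | h | h
    · rw [(hBval p).2.2 h]; exact hβ2
    · rw [(hBval p).2.1 h]; exact hw0ne2
    · rw [(hBval p).1 (by omega)]; exact hB'2 _
  have hB7 : ∀ p, B p = 7 → 1 ≤ p := by
    intro p hp
    rcases lt_trichotomy p 0 with h | h | h
    · rw [(hBval p).2.2 h] at hp; exact absurd hp hβ7
    · rw [(hBval p).2.1 h] at hp; exact absurd hp (h0 (by omega))
    · omega
  have hBX : B ∈ XU := by
    refine ⟨fun p q => by rw [hBcls p, hBcls q], fun p _ hp => absurd hp (hB2 p),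
      fun p q hp hq => ?_, fun p _ hp => absurd hp (hB2 p)⟩
    have hp1 := hB7 p hp
    have hq1 := hB7 q hq
    rw [(hBval p).1 hp1] at hp
    rw [(hBval q).1 hq1] at hq
    have := hB'.2.2.1 _ _ hp hq
    omega
  have hm : ∀ (i : ℕ) (h : i < w.length), B i = w.get ⟨i, h⟩ := by
    intro i h
    rcases Nat.eq_zero_or_pos i with rfl | hi
    · rw [(hBval _).2.1 (by norm_num)]
    · have hi1 : (1:ℤ) ≤ (i:ℤ) := by omega
      have hidx : ((i:ℤ)) - 1 = ((i - 1 : ℕ) : ℤ) := by push_cast; omega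
      have htl2 : i - 1 < w.tail.length := by
        have := List.length_tail (l := w)
        omega
      have h2 := hm' ⟨i - 1, htl2⟩
      have h3 : w.tail.get ⟨i - 1, htl2⟩ = w.get ⟨i, h⟩ := by
        rw [List.get_tail]
        congr 1
        simp only [Fin.mk.injEq]
        omega
      rw [(hBval _).1 hi1, hidx, ← h3]
      exact h2
  refine ⟨B, hBX, fun i => hm i i.2, fun k => ?_⟩
  rw [hy' k]
  have h1 : (1:ℤ) ≤ (w.length : ℤ) - 1 + (k : ℤ) := by
    have := List.length_tail (l := w)
    omega
  rw [(hBval _).1 h1]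
  congr 1
  have hc2 : ((w.tail.length : ℕ) : ℤ) = (w.length : ℤ) - 1 := by
    rw [List.length_tail]
    push_cast [Nat.cast_sub (by omega : 1 ≤ w.length)]
    ring
  omega

/-- Class-0 words: letters in `{0,1,2}` with at most one `2`. -/
def S0 (n : ℕ) : Set (List (Fin 16)) :=
  {w | w.length = n ∧ (∀ i : Fin w.length, w.get i = 2 ∨ w.get i = 0 ∨ w.get i = 1) ∧
       ∀ i j : Fin w.length, w.get i = 2 → w.get j = 2 → (i : ℕ) = (j : ℕ)}

/-- Class-1 words: letters in `{3,…,7}` with at most one `7`. -/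
def S1 (n : ℕ) : Set (List (Fin 16)) :=
  {w | w.length = n ∧ (∀ i : Fin w.length, 3 ≤ ((w.get i : Fin 16) : ℕ) ∧
        ((w.get i : Fin 16) : ℕ) < 8) ∧
       ∀ i j : Fin w.length, w.get i = 7 → w.get j = 7 → (i : ℕ) = (j : ℕ)}

lemma XU_LC_sub {n : ℕ} (hn : 2 ≤ n) : LC XU n ⊆ S0 n ∪ S1 n := by
  rintro w ⟨hlen, hcon⟩
  have hpos : 0 < w.length := by omega
  obtain ⟨y, B₀, hB₀, hm₀, -⟩ := Set.nonempty_iff_ne_empty.mpr hcon.2.1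
  have hval : ∀ i : Fin w.length, w.get i = B₀ i := fun i => (hm₀ i).symm
  have hclsc : ∀ i : Fin w.length, cls (w.get i) = cls (w.get ⟨0, hpos⟩) := by
    intro i
    rw [hval i, hval ⟨0, hpos⟩]
    exact hB₀.1 _ _
  rcases cls_cases (w.get ⟨0, hpos⟩) with h | h | h
  · left
    refine ⟨hlen, fun i => ?_, fun i j hi hj => ?_⟩
    · exact fin16_lt3 _ (cls_val0.mp ((hclsc i).trans h))
    · have h1 : B₀ ((i : ℕ) : ℤ) = 2 := by rw [← hval i]; exact hi
      have h2 : B₀ ((j : ℕ) : ℤ) = 2 := by rw [← hval j]; exact hj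
      have := hB₀.2.1 _ _ h1 h2
      omega
  · right
    refine ⟨hlen, fun i => ?_, fun i j hi hj => ?_⟩
    · exact cls_val1.mp ((hclsc i).trans h)
    · have h1 : B₀ ((i : ℕ) : ℤ) = 7 := by rw [← hval i]; exact hi
      have h2 : B₀ ((j : ℕ) : ℤ) = 7 := by rw [← hval j]; exact hj
      have := hB₀.2.2.1 _ _ h1 h2
      omega
  · exfalso
    have hv8 : ∀ i : Fin w.length, 8 ≤ ((w.get i : Fin 16) : ℕ) :=
      fun i => cls_val2.mp ((hclsc i).trans h)
    refine XU_not_constraint (by omega : 2 ≤ w.length) (fun i hh => by have := hv8 ⟨i, hh⟩; omega)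
      (fun i hh => hclsc ⟨i, hh⟩) (fun hh => ?_) hcon
    intro h7
    have := hv8 ⟨0, hh⟩
    rw [h7] at this
    have h77 : ((7 : Fin 16) : ℕ) = 7 := rfl
    omega

lemma XU_ELC_sub {n : ℕ} (hn : 2 ≤ n) : ELC XU n ⊆ S0 n := by
  rintro w ⟨hlen, hcon, b, hb, hinf⟩
  rcases XU_LC_sub hn ⟨hlen, hcon⟩ with h | h
  · exact h
  · exfalso
    obtain ⟨-, hlet1, huniq7⟩ := h
    have hpos : 0 < w.length := by omega
    have hclsc1 : ∀ (i : ℕ) (hh : i < w.length),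
        cls (w.get ⟨i, hh⟩) = cls (w.get ⟨0, by omega⟩) := by
      intro i hh
      rw [cls_val1.mpr (hlet1 ⟨i, hh⟩), cls_val1.mpr (hlet1 ⟨0, by omega⟩)]
    have h7 : w.get ⟨0, hpos⟩ = 7 := by
      by_contra h7
      exact XU_not_constraint (by omega) (fun i hh => (hlet1 ⟨i, hh⟩).1) hclsc1
        (fun _ => h7) hcon
    rw [hlen] at hb
    have hbn1 : b (n - 1) = 7 := by
      have hg := wordOf_get b (n - 1) 0 (by rw [wordOf_length]; omega)
      rw [List.get_of_eq hb ⟨0, by rw [wordOf_length]; omega⟩] at hg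
      rw [Nat.sub_zero] at hg
      rw [← hg]
      exact h7
    obtain ⟨m, hm, hconm⟩ := hinf n
    have hMlen : (wordOf b m).length = m + 1 := wordOf_length b m
    have hMpos : 0 < (wordOf b m).length := by omega
    have hMi : m - (n - 1) < (wordOf b m).length := by omega
    have hM2 : (wordOf b m).get ⟨m - (n - 1), hMi⟩ = 7 := by
      rw [wordOf_get]
      have he : m - (m - (n - 1)) = n - 1 := by omega
      rw [he, hbn1]
    rcases XU_LC_sub (n := m + 1) (by omega) ⟨hMlen, hconm⟩ with hM | hM
    · obtain ⟨-, hlet0, -⟩ := hM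
      have := hlet0 ⟨m - (n - 1), hMi⟩
      rw [hM2] at this
      rcases this with h1 | h1 | h1 <;> exact absurd h1 (by decide)
    · obtain ⟨-, hlet1', huniq7'⟩ := hM
      have hclsc1' : ∀ (i : ℕ) (hh : i < (wordOf b m).length),
          cls ((wordOf b m).get ⟨i, hh⟩) = cls ((wordOf b m).get ⟨0, by omega⟩) := by
        intro i hh
        rw [cls_val1.mpr (hlet1' ⟨i, hh⟩), cls_val1.mpr (hlet1' ⟨0, by omega⟩)]
      have hM7 : (wordOf b m).get ⟨0, hMpos⟩ = 7 := by
        by_contra hx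
        exact XU_not_constraint (by omega) (fun i hh => (hlet1' ⟨i, hh⟩).1) hclsc1'
          (fun _ => hx) hconm
      have := huniq7' ⟨0, hMpos⟩ ⟨m - (n - 1), hMi⟩ hM7 hM2
      simp only at this
      omega

end PartTwoD
section PartTwoE

lemma tendsto_log_poly_pow2 (c : ℕ) (hc : 1 ≤ c) :
    Filter.Tendsto (fun n : ℕ => Real.log (2 * (((n : ℝ) + 1) * (c : ℝ) ^ n)) / n)
      Filter.atTop (nhds (Real.log c)) := by
  have h1 : Filter.Tendsto (fun n : ℕ => Real.log 2 / n) Filter.atTop (nhds 0) := by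
    have := (tendsto_one_div_atTop_nhds_zero_nat (𝕜 := ℝ)).const_mul (Real.log 2)
    simpa [mul_one_div, div_eq_mul_inv] using this
  have h2 := tendsto_log_poly_pow (K := 1) (by norm_num) c hc
  have h3 := h1.add h2
  rw [zero_add] at h3
  apply h3.congr'
  filter_upwards [Filter.eventually_gt_atTop 0] with n hn
  have hpos : (0:ℝ) < ((n : ℝ) + 1) * (c : ℝ) ^ n := by positivity
  rw [Real.log_mul (by norm_num : (2:ℝ) ≠ 0) hpos.ne', add_div]

lemma S0_card (n : ℕ) : Nat.card ↥(S0 n) ≤ (n + 1) * 2 ^ n := by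
  apply card_marker_words_le (μ := (2 : Fin 16))
    (e := fun a : Fin 16 => if a = 1 then (1 : Fin 2) else 0)
    (L := {a : Fin 16 | a = 0 ∨ a = 1})
  · exact fun w hw => hw.1
  · exact fun w hw => hw.2.2
  · intro w hw i
    rcases hw.2.1 i with h | h | h
    · exact Or.inl h
    · exact Or.inr (Or.inl h)
    · exact Or.inr (Or.inr h)
  · intro a ha b hb hab
    revert ha hb hab
    revert a b
    decide
  · decide

lemma S1_card (n : ℕ) : Nat.card ↥(S1 n) ≤ (n + 1) * 4 ^ n := by
  apply card_marker_words_le (μ := (7 : Fin 16))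
    (e := fun a : Fin 16 => (⟨(a : ℕ) % 4, Nat.mod_lt _ (by norm_num)⟩ : Fin 4))
    (L := {a : Fin 16 | (3 ≤ (a : ℕ) ∧ (a : ℕ) < 8) ∧ a ≠ 7})
  · exact fun w hw => hw.1
  · exact fun w hw => hw.2.2
  · intro w hw i
    by_cases h : w.get i = 7
    · exact Or.inl h
    · exact Or.inr ⟨hw.2.1 i, h⟩
  · intro a ha b hb hab
    revert ha hb hab
    revert a b
    decide
  · decide

lemma XU_LC_upper {n : ℕ} (hn : 2 ≤ n) :
    Nat.card ↥(LC XU n) ≤ 2 * ((n + 1) * 4 ^ n) := by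
  have hsub := XU_LC_sub hn
  have hfin : (S0 n ∪ S1 n).Finite :=
    words_finite (S := S0 n ∪ S1 n) (n := n) (by
      rintro w (hw | hw) <;> exact hw.1)
  have h1 : Nat.card ↥(LC XU n) ≤ Nat.card ↥(S0 n ∪ S1 n) := Nat.card_mono hfin hsub
  have h2 : Nat.card ↥(S0 n ∪ S1 n) ≤ Nat.card ↥(S0 n) + Nat.card ↥(S1 n) := by
    rw [Nat.card_coe_set_eq, Nat.card_coe_set_eq, Nat.card_coe_set_eq]
    exact Set.ncard_union_le _ _
  have h3 := S0_card n
  have h4 := S1_card n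
  have h5 : (n + 1) * 2 ^ n ≤ (n + 1) * 4 ^ n :=
    Nat.mul_le_mul_left _ (Nat.pow_le_pow_left (by omega) n)
  calc Nat.card ↥(LC XU n) ≤ Nat.card ↥(S0 n) + Nat.card ↥(S1 n) := le_trans h1 h2
  _ ≤ (n + 1) * 2 ^ n + (n + 1) * 4 ^ n := Nat.add_le_add h3 h4
  _ ≤ (n + 1) * 4 ^ n + (n + 1) * 4 ^ n := Nat.add_le_add_right h5 _
  _ = 2 * ((n + 1) * 4 ^ n) := by ring

lemma XU_ELC_upper {n : ℕ} (hn : 2 ≤ n) :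
    Nat.card ↥(ELC XU n) ≤ (n + 1) * 2 ^ n := by
  have hfin : (S0 n).Finite := words_finite (fun w hw => hw.1)
  exact le_trans (Nat.card_mono hfin (XU_ELC_sub hn)) (S0_card n)

lemma XU_ELC_lower (m : ℕ) : 2 ^ (m + 1) ≤ Nat.card ↥(ELC XU (m + 2)) := by
  apply le_card_words (fun w hw => hw.1)
    (fun v : Fin (m + 1) → Fin 2 => List.ofFn (Fin.cons 1 fun j => eb (v j)))
  · exact fun v => XU_c0_extendable m v
  · intro v v' h
    have h2 := List.ofFn_injective h
    funext j
    have h3 := congrFun h2 j.succ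
    simp only [Fin.cons_succ] at h3
    exact eb_inj h3

lemma XU_LC_lower (m : ℕ) : 4 ^ (m + 1) ≤ Nat.card ↥(LC XU (m + 2)) := by
  apply le_card_words (fun w hw => hw.1)
    (fun u : Fin (m + 1) → Fin 4 => List.ofFn (Fin.cons 7 fun j => c1 (u j)))
  · intro u
    exact ⟨by simp, XU_c1_constraint m u⟩
  · intro u u' h
    have h2 := List.ofFn_injective h
    funext j
    have h3 := congrFun h2 j.succ
    simp only [Fin.cons_succ] at h3
    exact c1_inj h3

def c2 : Fin 8 → Fin 16 := fun v => ⟨(v : ℕ) + 8, by omega⟩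

lemma c2_inj : Function.Injective c2 := by
  intro a b h
  have h1 := congrArg Fin.val h
  simp [c2] at h1
  exact Fin.ext h1

lemma XU_mem_c2 {B : ℤ → Fin 16} (hval : ∀ p, 8 ≤ ((B p : Fin 16) : ℕ)) : B ∈ XU := by
  have h2 : ∀ p, B p ≠ 2 := by
    intro p h
    have := hval p
    rw [h] at this
    have h22 : ((2 : Fin 16) : ℕ) = 2 := rfl
    omega
  have h7 : ∀ p, B p ≠ 7 := by
    intro p h
    have := hval p
    rw [h] at this
    have h77 : ((7 : Fin 16) : ℕ) = 7 := rfl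
    omega
  exact ⟨fun p q => by rw [cls_val2.mpr (hval p), cls_val2.mpr (hval q)],
    fun p _ hp => absurd hp (h2 p), fun p _ hp => absurd hp (h7 p),
    fun p _ hp => absurd hp (h2 p)⟩

lemma XU_Lang_lower (n : ℕ) : 8 ^ n ≤ Nat.card ↥(Lang XU n) := by
  apply le_card_words (fun w hw => hw.1)
    (fun v : Fin n → Fin 8 => List.ofFn (fun i => c2 (v i)))
  · intro v
    refine ⟨by simp, ?_⟩
    set x : ℤ → Fin 16 := fun i =>
      if h : 0 ≤ i ∧ i < (n : ℤ) then c2 (v ⟨i.toNat, by omega⟩) else c2 0 with hx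
    refine ⟨x, XU_mem_c2 ?_, ?_⟩
    · intro p
      by_cases hc : 0 ≤ p ∧ p < (n : ℤ)
      · rw [hx]
        simp only [dif_pos hc]
        simp [c2]
      · rw [hx]
        simp only [dif_neg hc]
        decide
    · intro i
      have hilen : (i : ℕ) < n := by
        have := i.2
        simpa using this
      have hgi : (List.ofFn fun i => c2 (v i)).get i = c2 (v ⟨(i : ℕ), hilen⟩) := by
        rw [List.get_ofFn]
        congr 1
      have hxi : x (0 + ((i : ℕ) : ℤ)) = c2 (v ⟨(i : ℕ), hilen⟩) := by
        rw [hx]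
        have hc : 0 ≤ (0 + ((i : ℕ) : ℤ)) ∧ (0 + ((i : ℕ) : ℤ)) < (n : ℤ) := by
          constructor <;> omega
        simp only [dif_pos hc]
        congr 2
        all_goals (ext; simp)
      rw [hxi, hgi]
  · intro v v' h
    have h2 := List.ofFn_injective h
    funext j
    exact c2_inj (congrFun h2 j)

lemma XU_hTop_ge : Real.log 8 ≤ hTop XU := by
  unfold hTop
  apply le_limsup_of_tendsto_le (g := fun _ : ℕ => Real.log 8) ?_ tendsto_const_nhds
    (fun n => log_card_div_le (fun w hw => hw.1))
  filter_upwards [Filter.eventually_ge_atTop 1] with n hn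
  have h1 : Real.log ((8 ^ n : ℕ)) ≤ Real.log (Nat.card ↥(Lang XU n)) :=
    log_nat_mono (XU_Lang_lower n)
  have h2 : Real.log ((8 ^ n : ℕ)) = n * Real.log 8 := by
    push_cast
    rw [Real.log_pow]
  have hn' : (n : ℝ) ≠ 0 := by
    have : (0:ℝ) < n := by exact_mod_cast hn
    positivity
  calc Real.log 8 = ((n : ℝ) * Real.log 8) / n := by field_simp
  _ ≤ _ := div_cast_mono n (h2 ▸ h1)

lemma XU_hC_ge : Real.log 4 ≤ hC XU := by
  rw [hC_eq]
  apply le_limsup_of_tendsto_le ?_ (tendsto_sub_one_mul_div (Real.log 4))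
    (fun n => log_card_div_le (fun w hw => hw.1))
  filter_upwards [Filter.eventually_ge_atTop 2] with n hn
  have h0 : 4 ^ (n - 1) ≤ Nat.card ↥(LC XU n) := by
    have := XU_LC_lower (n - 2)
    have he : n - 2 + 2 = n := by omega
    have he2 : n - 2 + 1 = n - 1 := by omega
    rwa [he, he2] at this
  have h1 : Real.log ((4 ^ (n - 1) : ℕ)) ≤ Real.log (Nat.card ↥(LC XU n)) :=
    log_nat_mono h0
  have h2 : Real.log ((4 ^ (n - 1) : ℕ)) = ((n : ℝ) - 1) * Real.log 4 := by
    rw [Nat.cast_pow, Real.log_pow, Nat.cast_sub (by omega : 1 ≤ n)]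
    norm_num
  exact div_cast_mono n (h2 ▸ h1)

lemma XU_hCstar_ge : Real.log 2 ≤ hCstar XU := by
  unfold hCstar
  apply le_limsup_of_tendsto_le ?_ (tendsto_sub_one_mul_div (Real.log 2))
    (fun n => log_card_div_le (fun w hw => hw.1))
  filter_upwards [Filter.eventually_ge_atTop 2] with n hn
  have h0 : 2 ^ (n - 1) ≤ Nat.card ↥(ELC XU n) := by
    have := XU_ELC_lower (n - 2)
    have he : n - 2 + 2 = n := by omega
    have he2 : n - 2 + 1 = n - 1 := by omega
    rwa [he, he2] at this
  have h1 : Real.log ((2 ^ (n - 1) : ℕ)) ≤ Real.log (Nat.card ↥(ELC XU n)) :=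
    log_nat_mono h0
  have h2 : Real.log ((2 ^ (n - 1) : ℕ)) = ((n : ℝ) - 1) * Real.log 2 := by
    rw [Nat.cast_pow, Real.log_pow, Nat.cast_sub (by omega : 1 ≤ n)]
    norm_num
  exact div_cast_mono n (h2 ▸ h1)

lemma XU_hCstar_le : hCstar XU ≤ Real.log 2 := by
  unfold hCstar
  have h2 : Real.log ((2:ℕ):ℝ) = Real.log 2 := by norm_num
  apply limsup_le_of_le_tendsto
    (fun n => div_nonneg (log_nat_nonneg _) (by positivity))
    ?_ (h2 ▸ tendsto_log_poly_pow (K := 1) (by norm_num) 2 (by norm_num))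
  filter_upwards [Filter.eventually_ge_atTop 2] with n hn
  apply div_cast_mono
  calc Real.log (Nat.card ↥(ELC XU n)) ≤ Real.log (((n + 1) * 2 ^ n : ℕ)) :=
    log_nat_mono (XU_ELC_upper hn)
  _ = Real.log (((n:ℝ) + 1) * (2:ℕ) ^ n) := by push_cast; ring_nf

lemma XU_hC_le : hC XU ≤ Real.log 4 := by
  rw [hC_eq]
  have h4 : Real.log ((4:ℕ):ℝ) = Real.log 4 := by norm_num
  apply limsup_le_of_le_tendsto
    (fun n => div_nonneg (log_nat_nonneg _) (by positivity))
    ?_ (h4 ▸ tendsto_log_poly_pow2 4 (by norm_num))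
  filter_upwards [Filter.eventually_ge_atTop 2] with n hn
  apply div_cast_mono
  calc Real.log (Nat.card ↥(LC XU n)) ≤ Real.log ((2 * ((n + 1) * 4 ^ n) : ℕ)) :=
    log_nat_mono (XU_LC_upper hn)
  _ = Real.log (2 * (((n:ℝ) + 1) * (4:ℕ) ^ n)) := by push_cast; ring_nf

lemma part2 : ∃ (A : Type) (_ : Fintype A) (X : Set (ℤ → A)),
    (letI : TopologicalSpace A := ⊥
     IsSubshift X) ∧
    0 < hCstar X ∧ hCstar X < hC X ∧ hC X < hTop X := by
  refine ⟨Fin 16, inferInstance, XU, XU_subshift, ?_, ?_, ?_⟩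
  · exact lt_of_lt_of_le (Real.log_pos (by norm_num)) XU_hCstar_ge
  · exact lt_of_le_of_lt XU_hCstar_le
      (lt_of_lt_of_le (Real.log_lt_log (by norm_num) (by norm_num)) XU_hC_ge)
  · exact lt_of_le_of_lt XU_hC_le
      (lt_of_lt_of_le (Real.log_lt_log (by norm_num) (by norm_num)) XU_hTop_ge)

end PartTwoE

/-- For every subshift, `0 ≤ h*_𝒞(X) ≤ h_𝒞(X) ≤ h_top(X)`;
there is a subshift for which all three inequalities are strict; and there are
weak-QFT subshifts which are not QFT. -/
theorem constraint_entropy_inequalities :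
    (∀ (A : Type) [Fintype A] [TopologicalSpace A] [DiscreteTopology A]
        (X : Set (ℤ → A)), IsSubshift X →
          0 ≤ hCstar X ∧ hCstar X ≤ hC X ∧ hC X ≤ hTop X) ∧
    (∃ (A : Type) (_ : Fintype A) (X : Set (ℤ → A)),
        (letI : TopologicalSpace A := ⊥
         IsSubshift X) ∧
        0 < hCstar X ∧ hCstar X < hC X ∧ hC X < hTop X) ∧
    (∃ (A : Type) (_ : Fintype A) (X : Set (ℤ → A)),
        letI : TopologicalSpace A := ⊥
        IsWeakQFT X ∧ ¬ IsQFT X) := by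
  refine ⟨?_, part2, part3⟩
  intro A _ _ _ X _
  exact part1 X

end QFTPaper
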